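/- arXiv:1506.07587 — 5 statements merged into one kernel-verified Lean document; each statement's English description precedes it below -/
import Mathlib

section
/- Fix k ≥ 3, let S = ⟨n_1, n_2, n_3⟩ = ⟨2k+1, 6k-5, 6k-1⟩, and for 0 ≤ j ≤ k-2 set s_j = 6k² + (6j+1)k - 5j - 5. Then s_j has exactly j+2 factorizations: (0, k+1+j, 0) and (3k-1-3i, j+1-i, 2i-1) for 1 ≤ i ≤ j+1. -/
/-- The set of factorizations of `n` over the generators `gens`. -/
def Zset {k : ℕ} (gens : Fin k → ℕ) (n : ℕ) : Set (Fin k → ℕ) :=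
  {a | ∑ i, a i * gens i = n}

/-- The length of a factorization. -/
def flen {k : ℕ} (a : Fin k → ℕ) : ℕ := ∑ i, a i

/-- The distance between two factorizations:
`max (|a - gcd(a,b)|, |b - gcd(a,b)|)` (componentwise gcd = min). -/
def fdist {k : ℕ} (a b : Fin k → ℕ) : ℕ :=
  max (∑ i, (a i - b i)) (∑ i, (b i - a i))

/-- There is an `N`-chain of factorizations within `Z` from `a` to `b`. -/
def IsNChain {k : ℕ} (Z : Set (Fin k → ℕ)) (N : ℕ) (a b : Fin k → ℕ) : Prop :=
  ∃ l : List (Fin k → ℕ), l.head? = some a ∧ l.getLast? = some b ∧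
    (∀ x ∈ l, x ∈ Z) ∧ l.Chain' (fun x y => fdist x y ≤ N)

/-- The catenary degree of `n`: the least `N` such that any two factorizations
of `n` are connected by an `N`-chain. -/
noncomputable def catDeg {k : ℕ} (gens : Fin k → ℕ) (n : ℕ) : ℕ :=
  sInf {N | ∀ a ∈ Zset gens n, ∀ b ∈ Zset gens n, IsNChain (Zset gens n) N a b}

/-- `n` is a Betti element: the graph on `Z(n)` joining factorizations with
nonzero componentwise gcd is disconnected. -/
def IsBetti {k : ℕ} (gens : Fin k → ℕ) (n : ℕ) : Prop :=
  ∃ a ∈ Zset gens n, ∃ b ∈ Zset gens n,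
    ¬ Relation.ReflTransGen
      (fun x y => x ∈ Zset gens n ∧ y ∈ Zset gens n ∧ ∃ i, min (x i) (y i) ≠ 0) a b

/-- The set of catenary degrees of elements of the monoid generated by `gens`. -/
def CatSet {k : ℕ} (gens : Fin k → ℕ) : Set ℕ :=
  {c | ∃ n, (Zset gens n).Nonempty ∧ catDeg gens n = c}

set_option maxHeartbeats 1000000

lemma forward_fact (k j : ℕ) (hk : 3 ≤ k) (hj : j ≤ k - 2) (a b c : ℕ)
    (h : a * (2 * k + 1) + b * (6 * k - 5) + c * (6 * k - 1)
        = 6 * k ^ 2 + (6 * j + 1) * k - 5 * j - 5) :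
    (a = 0 ∧ b = k + 1 + j ∧ c = 0) ∨
      ∃ i : ℕ, 1 ≤ i ∧ i ≤ j + 1 ∧ a = 3 * k - 1 - 3 * i ∧ b = j + 1 - i ∧ c = 2 * i - 1 := by
  have hj' : j + 2 ≤ k := by omega
  have h1 : (5:ℕ) ≤ 6 * k := by omega
  have h2 : (1:ℕ) ≤ 6 * k := by omega
  have h3 : 5 * j ≤ 6 * k ^ 2 + (6 * j + 1) * k := by nlinarith
  have h4 : (5:ℕ) ≤ 6 * k ^ 2 + (6 * j + 1) * k - 5 * j := by
    have : 5 + 5 * j ≤ 6 * k ^ 2 + (6 * j + 1) * k := by nlinarith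
    omega
  have hz : (a:ℤ) * (2 * (k:ℤ) + 1) + (b:ℤ) * (6 * (k:ℤ) - 5) + (c:ℤ) * (6 * (k:ℤ) - 1)
      = 6 * (k:ℤ) ^ 2 + (6 * (j:ℤ) + 1) * (k:ℤ) - 5 * (j:ℤ) - 5 := by
    zify [h1, h2, h3, h4] at h
    linarith [h]
  have hK3 : (3:ℤ) ≤ (k:ℤ) := by exact_mod_cast hk
  have hJK : (j:ℤ) ≤ (k:ℤ) - 2 := by omega
  have hJ0 : (0:ℤ) ≤ (j:ℤ) := Int.natCast_nonneg j
  have ha0 : (0:ℤ) ≤ (a:ℤ) := Int.natCast_nonneg a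
  have hb0 : (0:ℤ) ≤ (b:ℤ) := Int.natCast_nonneg b
  have hc0 : (0:ℤ) ≤ (c:ℤ) := Int.natCast_nonneg c
  have hdvd : (6 * (k:ℤ) - 5) ∣ 4 * (2 * (a:ℤ) + 3 * (c:ℤ)) := by
    refine ⟨3 * (k:ℤ) + 3 * (j:ℤ) + 3 - (a:ℤ) - 3 * (b:ℤ) - 3 * (c:ℤ), ?_⟩
    linear_combination 3 * hz
  have hco : IsCoprime (6 * (k:ℤ) - 5) (4:ℤ) :=
    ⟨6 * (k:ℤ) - 5, -(9 * (k:ℤ) ^ 2 - 15 * (k:ℤ) + 6), by ring⟩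
  have hd : (6 * (k:ℤ) - 5) ∣ (2 * (a:ℤ) + 3 * (c:ℤ)) := hco.dvd_of_dvd_mul_left hdvd
  obtain ⟨β, hβ⟩ := hd
  have hβ0 : 0 ≤ β := by nlinarith
  have h65 : (0:ℤ) ≤ 6 * (k:ℤ) - 5 := by linarith
  have h21 : (0:ℤ) ≤ 2 * (k:ℤ) + 1 := by linarith
  have hβ1 : β ≤ 1 := by
    by_contra hb2
    push_neg at hb2
    have h2b : 2 ≤ β := hb2
    have e1 : (a:ℤ) * (2 * (k:ℤ) + 1) + (c:ℤ) * (6 * (k:ℤ) - 1)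
        ≤ 6 * (k:ℤ) ^ 2 + (6 * (j:ℤ) + 1) * (k:ℤ) - 5 * (j:ℤ) - 5 := by
      have hbn : (0:ℤ) ≤ (b:ℤ) * (6 * (k:ℤ) - 5) := mul_nonneg hb0 h65
      linarith
    have e2 : (2 * (a:ℤ) + 3 * (c:ℤ)) * (2 * (k:ℤ) + 1)
        ≤ 2 * ((a:ℤ) * (2 * (k:ℤ) + 1) + (c:ℤ) * (6 * (k:ℤ) - 1)) := by
      have e2' : 2 * ((a:ℤ) * (2 * (k:ℤ) + 1) + (c:ℤ) * (6 * (k:ℤ) - 1))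
          - (2 * (a:ℤ) + 3 * (c:ℤ)) * (2 * (k:ℤ) + 1) = (c:ℤ) * (6 * (k:ℤ) - 5) := by
        ring
      linarith [mul_nonneg hc0 h65]
    have e3 : 2 * (6 * (k:ℤ) - 5) ≤ 2 * (a:ℤ) + 3 * (c:ℤ) := by
      have := mul_le_mul_of_nonneg_left h2b h65
      linarith [hβ]
    have e4 : 2 * (6 * (k:ℤ) - 5) * (2 * (k:ℤ) + 1)
        ≤ (2 * (a:ℤ) + 3 * (c:ℤ)) * (2 * (k:ℤ) + 1) :=
      mul_le_mul_of_nonneg_right e3 h21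
    nlinarith [mul_nonneg (by linarith : (0:ℤ) ≤ (k:ℤ) - 2 - (j:ℤ))
      (by linarith : (0:ℤ) ≤ 12 * (k:ℤ) - 10)]
  have hβcases : β = 0 ∨ β = 1 := by omega
  rcases hβcases with rfl | rfl
  · have ha : a = 0 := by omega
    have hc : c = 0 := by omega
    subst ha hc
    have key : ((b:ℤ) - ((k:ℤ) + 1 + (j:ℤ))) * (6 * (k:ℤ) - 5) = 0 := by
      linear_combination hz
    have hb : (b:ℤ) = (k:ℤ) + 1 + (j:ℤ) := by
      rcases mul_eq_zero.mp key with h' | h' <;> linarith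
    left
    refine ⟨rfl, by omega, rfl⟩
  · right
    have hac : 2 * (a:ℤ) + 3 * (c:ℤ) = 6 * (k:ℤ) - 5 := by linarith
    set i : ℕ := (c + 1) / 2 with hi
    have hci : (c:ℤ) = 2 * (i:ℤ) - 1 := by omega
    have hai : (a:ℤ) = 3 * (k:ℤ) - 1 - 3 * (i:ℤ) := by omega
    have key : ((b:ℤ) - ((j:ℤ) + 1 - (i:ℤ))) * (6 * (k:ℤ) - 5) = 0 := by
      linear_combination hz - (2 * (k:ℤ) + 1) * hai - (6 * (k:ℤ) - 1) * hci
    have hb : (b:ℤ) = (j:ℤ) + 1 - (i:ℤ) := by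
      rcases mul_eq_zero.mp key with h' | h' <;> linarith
    exact ⟨i, by omega, by omega, by omega, by omega, by omega⟩


lemma base_mem (k j : ℕ) (hk : 3 ≤ k) (hj : j ≤ k - 2) :
    (k + 1 + j) * (6 * k - 5) = 6 * k ^ 2 + (6 * j + 1) * k - 5 * j - 5 := by
  have h1 : (5:ℕ) ≤ 6 * k := by omega
  have h3 : 5 * j ≤ 6 * k ^ 2 + (6 * j + 1) * k := by nlinarith
  have h4 : (5:ℕ) ≤ 6 * k ^ 2 + (6 * j + 1) * k - 5 * j := by
    have : 5 + 5 * j ≤ 6 * k ^ 2 + (6 * j + 1) * k := by nlinarith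
    omega
  zify [h1, h3, h4]
  ring

lemma fam_mem (k j i : ℕ) (hk : 3 ≤ k) (hj : j ≤ k - 2) (hi1 : 1 ≤ i) (hi2 : i ≤ j + 1) :
    (3 * k - 1 - 3 * i) * (2 * k + 1) + (j + 1 - i) * (6 * k - 5) + (2 * i - 1) * (6 * k - 1)
      = 6 * k ^ 2 + (6 * j + 1) * k - 5 * j - 5 := by
  have h1 : (5:ℕ) ≤ 6 * k := by omega
  have h2 : (1:ℕ) ≤ 6 * k := by omega
  have h3 : 5 * j ≤ 6 * k ^ 2 + (6 * j + 1) * k := by nlinarith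
  have h4 : (5:ℕ) ≤ 6 * k ^ 2 + (6 * j + 1) * k - 5 * j := by
    have : 5 + 5 * j ≤ 6 * k ^ 2 + (6 * j + 1) * k := by nlinarith
    omega
  have h5 : (1:ℕ) ≤ 3 * k := by omega
  have h6 : 3 * i ≤ 3 * k - 1 := by omega
  have h7 : (1:ℕ) ≤ 2 * i := by omega
  zify [h1, h2, h3, h4, h5, h6, h7, hi2]
  ring


lemma zset_eq (k j : ℕ) (hk : 3 ≤ k) (hj : j ≤ k - 2) :
    Zset ![2 * k + 1, 6 * k - 5, 6 * k - 1] (6 * k ^ 2 + (6 * j + 1) * k - 5 * j - 5) =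
      {![0, k + 1 + j, 0]} ∪
        {v | ∃ i : ℕ, 1 ≤ i ∧ i ≤ j + 1 ∧ v = ![3 * k - 1 - 3 * i, j + 1 - i, 2 * i - 1]} := by
  ext v
  have hv : v = ![v 0, v 1, v 2] := by
    funext x; fin_cases x <;> rfl
  constructor
  · intro hmem
    have h : v 0 * (2 * k + 1) + v 1 * (6 * k - 5) + v 2 * (6 * k - 1)
        = 6 * k ^ 2 + (6 * j + 1) * k - 5 * j - 5 := by
      simpa [Zset, Fin.sum_univ_three] using hmem
    rcases forward_fact k j hk hj (v 0) (v 1) (v 2) h with ⟨h0, h1, h2⟩ | ⟨i, hi1, hi2, h0, h1, h2⟩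
    · left
      rw [hv, h0, h1, h2]
      rfl
    · right
      exact ⟨i, hi1, hi2, by rw [hv, h0, h1, h2]⟩
  · rintro (h | ⟨i, hi1, hi2, h⟩)
    · have hb : v = ![0, k + 1 + j, 0] := h
      simp only [Zset, Set.mem_setOf_eq, Fin.sum_univ_three, hb]
      simpa using base_mem k j hk hj
    · simp only [Zset, Set.mem_setOf_eq, Fin.sum_univ_three, h]
      simpa using fam_mem k j i hk hj hi1 hi2

/-- For k ≥ 3, 0 ≤ j ≤ k-2 and s_j = 6k² + (6j+1)k - 5j - 5, the element s_j of
S = ⟨2k+1, 6k-5, 6k-1⟩ has exactly the j+2 factorizations (0, k+1+j, 0) and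
(3k-1-3i, j+1-i, 2i-1) for 1 ≤ i ≤ j+1. -/
theorem factorizations_of_sj (k j : ℕ) (hk : 3 ≤ k) (hj : j ≤ k - 2) :
    Zset ![2 * k + 1, 6 * k - 5, 6 * k - 1] (6 * k ^ 2 + (6 * j + 1) * k - 5 * j - 5) =
      {![0, k + 1 + j, 0]} ∪
        {v | ∃ i : ℕ, 1 ≤ i ∧ i ≤ j + 1 ∧ v = ![3 * k - 1 - 3 * i, j + 1 - i, 2 * i - 1]} ∧
    (Zset ![2 * k + 1, 6 * k - 5, 6 * k - 1]
        (6 * k ^ 2 + (6 * j + 1) * k - 5 * j - 5)).ncard = j + 2 := by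
  have hset := zset_eq k j hk hj
  refine ⟨hset, ?_⟩
  rw [hset]
  have hF : ({![0, k + 1 + j, 0]} ∪
      {v | ∃ i : ℕ, 1 ≤ i ∧ i ≤ j + 1 ∧ v = ![3 * k - 1 - 3 * i, j + 1 - i, 2 * i - 1]}
        : Set (Fin 3 → ℕ)) =
      ↑(insert ![0, k + 1 + j, 0] ((Finset.Icc 1 (j + 1)).image
        (fun i => ![3 * k - 1 - 3 * i, j + 1 - i, 2 * i - 1]))) := by
    ext v
    simp only [Set.mem_union, Set.mem_singleton_iff, Set.mem_setOf_eq, Finset.coe_insert,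
      Set.mem_insert_iff, Finset.coe_image, Set.mem_image, Finset.mem_coe, Finset.mem_Icc]
    constructor
    · rintro (h | ⟨i, hi1, hi2, h⟩)
      · exact Or.inl h
      · exact Or.inr ⟨i, ⟨hi1, hi2⟩, h.symm⟩
    · rintro (h | ⟨i, ⟨hi1, hi2⟩, h⟩)
      · exact Or.inl h
      · exact Or.inr ⟨i, hi1, hi2, h.symm⟩
  rw [hF, Set.ncard_coe_finset]
  rw [Finset.card_insert_of_notMem, Finset.card_image_of_injOn]
  · simp [Nat.card_Icc]
  · intro i hi i' hi' hii
    simp only [Finset.coe_Icc, Set.mem_Icc] at hi hi'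
    have := congrFun hii 2
    simp only [Matrix.cons_val_two, Matrix.tail_cons, Matrix.head_cons] at this
    omega
  · intro hmem
    simp only [Finset.mem_image, Finset.mem_Icc] at hmem
    obtain ⟨i, ⟨hi1, hi2⟩, hii⟩ := hmem
    have := congrFun hii 2
    simp only [Matrix.cons_val_two, Matrix.tail_cons, Matrix.head_cons] at this
    omega
end

section
/- Fix k ≥ 3, let S = ⟨2k+1, 6k-5, 6k-1⟩, and for 0 ≤ j ≤ k-2 set s_j = 6k² + (6j+1)k - 5j - 5. Then the catenary degree of s_j equals 3k - 3 - j. -/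
/-! ### Auxiliary definitions and lemmas -/

section Aux

/-- The factorization `(0, k+1+j, 0)` of `s_j`. -/
def z0v (k j : ℕ) : Fin 3 → ℕ := ![0, k + 1 + j, 0]

/-- The factorization `(3k-4-3m, j-m, 2m+1)` of `s_j`, for `0 ≤ m ≤ j`. -/
def wv (k j m : ℕ) : Fin 3 → ℕ := ![3 * k - 4 - 3 * m, j - m, 2 * m + 1]

lemma fdist_comm' {k : ℕ} (a b : Fin k → ℕ) : fdist a b = fdist b a := max_comm _ _

lemma fdist_self' {k : ℕ} (a : Fin k → ℕ) : fdist a a = 0 := by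
  simp [fdist]

lemma chain_single {k : ℕ} {Z : Set (Fin k → ℕ)} {N : ℕ} {a : Fin k → ℕ} (ha : a ∈ Z) :
    IsNChain Z N a a :=
  ⟨[a], rfl, rfl, by simpa using ha, List.isChain_singleton a⟩

lemma chain_pair {k : ℕ} {Z : Set (Fin k → ℕ)} {N : ℕ} {a b : Fin k → ℕ}
    (ha : a ∈ Z) (hb : b ∈ Z) (hd : fdist a b ≤ N) : IsNChain Z N a b :=
  ⟨[a, b], rfl, rfl, by simp [ha, hb], List.isChain_pair.mpr hd⟩

lemma chain_symm {k : ℕ} {Z : Set (Fin k → ℕ)} {N : ℕ} {a b : Fin k → ℕ}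
    (h : IsNChain Z N a b) : IsNChain Z N b a := by
  obtain ⟨l, h1, h2, h3, h4⟩ := h
  refine ⟨l.reverse, by simpa using h2, by simpa using h1, by simpa using h3, ?_⟩
  rw [List.Chain', List.isChain_reverse]
  refine h4.imp ?_
  intro x y h
  simpa [flip, fdist_comm'] using h

lemma chain_trans {k : ℕ} {Z : Set (Fin k → ℕ)} {N : ℕ} {a b c : Fin k → ℕ}
    (h : IsNChain Z N a b) (h' : IsNChain Z N b c) : IsNChain Z N a c := by
  obtain ⟨l, h1, h2, h3, h4⟩ := h
  obtain ⟨l', h1', h2', h3', h4'⟩ := h'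
  have hl : l ≠ [] := by rintro rfl; simp at h1
  have hl' : l' ≠ [] := by rintro rfl; simp at h1'
  refine ⟨l ++ l', ?_, ?_, ?_, ?_⟩
  · rwa [List.head?_append_of_ne_nil _ hl]
  · rwa [List.getLast?_append_of_ne_nil _ hl']
  · intro x hx; rcases List.mem_append.mp hx with h | h
    · exact h3 x h
    · exact h3' x h
  · rw [List.Chain', List.isChain_append]
    refine ⟨h4, h4', ?_⟩
    intro x hx y hy
    rw [h2] at hx; rw [h1'] at hy
    cases hx; cases hy
    simp [fdist_self']

lemma mem_Zset_iff {g1 g2 g3 n : ℕ} {a : Fin 3 → ℕ} :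
    a ∈ Zset ![g1, g2, g3] n ↔ a 0 * g1 + a 1 * g2 + a 2 * g3 = n := by
  simp [Zset, Fin.sum_univ_three]

lemma z0v_mem (k j : ℕ) (hk : 3 ≤ k) (hj : j + 2 ≤ k) :
    z0v k j ∈ Zset ![2 * k + 1, 6 * k - 5, 6 * k - 1]
      (6 * k ^ 2 + (6 * j + 1) * k - 5 * j - 5) := by
  rw [mem_Zset_iff]
  show 0 * (2 * k + 1) + (k + 1 + j) * (6 * k - 5) + 0 * (6 * k - 1) = _
  have hn : 5 * j + 5 ≤ 6 * k ^ 2 + (6 * j + 1) * k := by nlinarith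
  simp only [Nat.sub_sub]
  zify [hn, show 5 ≤ 6 * k from by omega, show 1 ≤ 6 * k from by omega]
  ring

lemma wv_mem (k j m : ℕ) (hk : 3 ≤ k) (hj : j + 2 ≤ k) (hm : m ≤ j) :
    wv k j m ∈ Zset ![2 * k + 1, 6 * k - 5, 6 * k - 1]
      (6 * k ^ 2 + (6 * j + 1) * k - 5 * j - 5) := by
  rw [mem_Zset_iff]
  show (3 * k - 4 - 3 * m) * (2 * k + 1) + (j - m) * (6 * k - 5)
      + (2 * m + 1) * (6 * k - 1) = _
  have hn : 5 * j + 5 ≤ 6 * k ^ 2 + (6 * j + 1) * k := by nlinarith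
  simp only [Nat.sub_sub]
  zify [hn, show 5 ≤ 6 * k from by omega, show 1 ≤ 6 * k from by omega,
    show 4 + 3 * m ≤ 3 * k from by omega, show m ≤ j from hm]
  ring

lemma fdist3 (a b : Fin 3 → ℕ) :
    fdist a b = max ((a 0 - b 0) + (a 1 - b 1) + (a 2 - b 2))
      ((b 0 - a 0) + (b 1 - a 1) + (b 2 - a 2)) := by
  simp [fdist, Fin.sum_univ_three]

lemma fdist_wv_succ (k j m : ℕ) (hj : j + 2 ≤ k) (hm : m + 1 ≤ j) :
    fdist (wv k j m) (wv k j (m + 1)) ≤ 4 := by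
  rw [fdist3]
  simp only [wv, Matrix.cons_val_zero, Matrix.cons_val_one, Matrix.head_cons,
    Matrix.cons_val_two, Matrix.tail_cons]
  omega

lemma fdist_z0_wv (k j m : ℕ) (hk : 3 ≤ k) (hj : j + 2 ≤ k) (hm : m ≤ j) :
    fdist (z0v k j) (wv k j m) = 3 * k - 3 - m := by
  rw [fdist3]
  simp only [wv, z0v, Matrix.cons_val_zero, Matrix.cons_val_one, Matrix.head_cons,
    Matrix.cons_val_two, Matrix.tail_cons]
  omega

lemma z0v_ne_wv (k j m : ℕ) : z0v k j ≠ wv k j m := by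
  intro h
  have := congrFun h 2
  simp [z0v, wv] at this

/-- Classification of the solutions of the defining equation. -/
lemma classify (k j : ℕ) (hk : 3 ≤ k) (hj : j + 2 ≤ k) (A B C : ℕ)
    (h : A * (2 * k + 1) + B * (6 * k - 5) + C * (6 * k - 1)
      = 6 * k ^ 2 + (6 * j + 1) * k - 5 * j - 5) :
    (A = 0 ∧ B = k + 1 + j ∧ C = 0) ∨
      (∃ m, m ≤ j ∧ A = 3 * k - 4 - 3 * m ∧ B = j - m ∧ C = 2 * m + 1) := by
  have hn : 5 * j + 5 ≤ 6 * k ^ 2 + (6 * j + 1) * k := by nlinarith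
  rw [Nat.sub_sub] at h
  zify [hn, show 5 ≤ 6 * k from by omega, show 1 ≤ 6 * k from by omega] at h
  have hkZ : (3 : ℤ) ≤ (k : ℤ) := by exact_mod_cast hk
  have hjZ : (j : ℤ) + 2 ≤ (k : ℤ) := by exact_mod_cast hj
  have hA : (0 : ℤ) ≤ (A : ℤ) := Int.natCast_nonneg A
  have hB : (0 : ℤ) ≤ (B : ℤ) := Int.natCast_nonneg B
  have hC : (0 : ℤ) ≤ (C : ℤ) := Int.natCast_nonneg C
  have key : ((A : ℤ) + 3 * B + 3 * C - 3 * k - 3 * j + 1) * (2 * k + 1)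
      = 4 * (2 * B + C - 2 * j - 1) := by linear_combination h
  -- bound 2B + C ≤ 4k - 2
  have hbc : 2 * (B : ℤ) + C ≤ 4 * k - 2 := by
    have h1 : (6 * (k:ℤ) - 5) * (2 * B + C) ≤ 2 * (6 * (k:ℤ)^2 + (6*j+1)*k - (5*j+5)) := by
      nlinarith [mul_nonneg hA (by linarith : (0:ℤ) ≤ 2*(k:ℤ)+1),
        mul_nonneg hC (by linarith : (0:ℤ) ≤ 6*(k:ℤ)+3)]
    have h2 : 2 * (6 * (k:ℤ)^2 + (6*j+1)*k - (5*j+5)) ≤ (6 * (k:ℤ) - 5) * (4 * k - 2) := by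
      nlinarith [mul_nonneg (by linarith : (0:ℤ) ≤ (k:ℤ) - 2 - j)
        (by linarith : (0:ℤ) ≤ 12*(k:ℤ) - 10)]
    have h3 : (0 : ℤ) < 6 * (k:ℤ) - 5 := by linarith
    nlinarith [h1, h2]
  set D : ℤ := (A : ℤ) + 3 * B + 3 * C - 3 * k - 3 * j + 1 with hD
  set X : ℤ := 2 * (B : ℤ) + C - 2 * j - 1 with hX
  have hXlb : -(2 * (k:ℤ) + 1) < X := by simp only [hX]; linarith
  have hXub : X < 2 * (2 * (k:ℤ) + 1) := by simp only [hX]; linarith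
  have hDlb : -4 < D := by nlinarith [key]
  have hDub : D < 8 := by nlinarith [key]
  have heven : (2 : ℤ) ∣ D := by
    have h1 : (2 : ℤ) ∣ D * (2 * k + 1) := ⟨2 * X, by linarith [key]⟩
    rcases (Int.prime_two.dvd_mul.mp h1) with h2 | h2
    · exact h2
    · exfalso; obtain ⟨t, ht⟩ := h2; omega
  obtain ⟨D', hD'⟩ := heven
  have key2 : D' * (2 * (k:ℤ) + 1) = 2 * X := by
    have keyr : 2 * (D' * (2 * (k:ℤ) + 1)) = 2 * (2 * X) := by
      linear_combination key - (2 * (k:ℤ) + 1) * hD'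
    exact mul_left_cancel₀ two_ne_zero keyr
  have heven2 : (2 : ℤ) ∣ D' := by
    have h1 : (2 : ℤ) ∣ D' * (2 * k + 1) := ⟨X, by linarith [key2]⟩
    rcases (Int.prime_two.dvd_mul.mp h1) with h2 | h2
    · exact h2
    · exfalso; obtain ⟨t, ht⟩ := h2; omega
  obtain ⟨d, hd⟩ := heven2
  have hD4 : D = 4 * d := by omega
  have hdcase : d = 0 ∨ d = 1 := by omega
  rcases hdcase with h0 | h1
  · right
    have hDz : D = 0 := by omega
    have hXz : X = 0 := by
      rw [hDz] at key; simp at key; omega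
    refine ⟨j - B, by omega, by omega, by omega, by omega⟩
  · left
    have hDz : D = 4 := by omega
    have hXz : X = 2 * k + 1 := by
      rw [hDz] at key; omega
    refine ⟨by omega, by omega, by omega⟩

lemma eq_of_components {a : Fin 3 → ℕ} {x y z : ℕ}
    (h0 : a 0 = x) (h1 : a 1 = y) (h2 : a 2 = z) : a = ![x, y, z] := by
  funext i
  fin_cases i <;> simp [h0, h1, h2]

/-- Vector-level classification of factorizations of `s_j`. -/
lemma classify_vec (k j : ℕ) (hk : 3 ≤ k) (hj : j + 2 ≤ k) (a : Fin 3 → ℕ)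
    (ha : a ∈ Zset ![2 * k + 1, 6 * k - 5, 6 * k - 1]
      (6 * k ^ 2 + (6 * j + 1) * k - 5 * j - 5)) :
    a = z0v k j ∨ ∃ m, m ≤ j ∧ a = wv k j m := by
  rw [mem_Zset_iff] at ha
  rcases classify k j hk hj _ _ _ ha with ⟨h0, h1, h2⟩ | ⟨m, hm, h0, h1, h2⟩
  · exact Or.inl (eq_of_components h0 h1 h2)
  · exact Or.inr ⟨m, hm, eq_of_components h0 h1 h2⟩

/-- Chains along consecutive `w` factorizations. -/
lemma chain_wv (k j : ℕ) (hk : 3 ≤ k) (hj : j + 2 ≤ k) {N : ℕ} (h4 : 4 ≤ N) :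
    ∀ m', m' ≤ j → ∀ m, m ≤ m' →
      IsNChain (Zset ![2 * k + 1, 6 * k - 5, 6 * k - 1]
        (6 * k ^ 2 + (6 * j + 1) * k - 5 * j - 5)) N (wv k j m) (wv k j m') := by
  intro m'
  induction m' with
  | zero =>
    intro _ m hm
    have : m = 0 := by omega
    subst this
    exact chain_single (wv_mem k j 0 hk hj (by omega))
  | succ p IH =>
    intro hp m hm
    rcases Nat.eq_or_lt_of_le hm with heq | hlt
    · subst heq
      exact chain_single (wv_mem k j (p + 1) hk hj (by omega))
    · refine chain_trans (IH (by omega) m (by omega)) ?_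
      exact chain_pair (wv_mem k j p hk hj (by omega)) (wv_mem k j (p+1) hk hj (by omega))
        (le_trans (fdist_wv_succ k j p hj (by omega)) h4)

/-- If a chain starts at `z` and ends elsewhere, some step leaves `z`. -/
lemma escape {Z : Set (Fin 3 → ℕ)} {N : ℕ} {z : Fin 3 → ℕ} :
    ∀ (l : List (Fin 3 → ℕ)) (b : Fin 3 → ℕ), l.head? = some z → l.getLast? = some b →
      b ≠ z → (∀ x ∈ l, x ∈ Z) → l.Chain' (fun x y => fdist x y ≤ N) →
      ∃ y ∈ Z, y ≠ z ∧ fdist z y ≤ N := by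
  intro l
  induction l with
  | nil => intro b h1; simp at h1
  | cons x t IH =>
    intro b h1 h2 hne h3 h4
    have hx : x = z := by simpa using h1
    subst hx
    cases t with
    | nil =>
      exfalso
      apply hne
      simpa using h2.symm
    | cons y t' =>
      by_cases hy : y = x
      · refine IH b ?_ ?_ hne ?_ ?_
        · simp [hy]
        · rw [List.getLast?_cons_cons] at h2; exact h2
        · intro u hu; exact h3 u (List.mem_cons_of_mem _ hu)
        · exact (List.isChain_cons_cons.mp h4).2
      · refine ⟨y, h3 y (by simp), hy, ?_⟩
        exact (List.isChain_cons_cons.mp h4).1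

end Aux

/-- For k ≥ 3, 0 ≤ j ≤ k-2 and s_j = 6k² + (6j+1)k - 5j - 5, the catenary degree
of s_j in S = ⟨2k+1, 6k-5, 6k-1⟩ equals 3k - 3 - j. -/
theorem catDeg_of_sj (k j : ℕ) (hk : 3 ≤ k) (hj : j ≤ k - 2) :
    catDeg ![2 * k + 1, 6 * k - 5, 6 * k - 1]
        (6 * k ^ 2 + (6 * j + 1) * k - 5 * j - 5) = 3 * k - 3 - j := by
  have hj' : j + 2 ≤ k := by omega
  set g : Fin 3 → ℕ := ![2 * k + 1, 6 * k - 5, 6 * k - 1] with hg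
  set n : ℕ := 6 * k ^ 2 + (6 * j + 1) * k - 5 * j - 5 with hn
  set Z : Set (Fin 3 → ℕ) := Zset g n with hZ
  have h4N : 4 ≤ 3 * k - 3 - j := by omega
  -- membership: 3k-3-j works
  have hmem : ∀ a ∈ Z, ∀ b ∈ Z, IsNChain Z (3 * k - 3 - j) a b := by
    have hz0w : ∀ m, m ≤ j → IsNChain Z (3 * k - 3 - j) (z0v k j) (wv k j m) := by
      intro m hm
      refine chain_trans (chain_pair (z0v_mem k j hk hj') (wv_mem k j j hk hj' le_rfl) ?_)
        (chain_symm (chain_wv k j hk hj' h4N j le_rfl m hm))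
      rw [fdist_z0_wv k j j hk hj' le_rfl]
    intro a ha b hb
    rcases classify_vec k j hk hj' a ha with rfl | ⟨m, hm, rfl⟩ <;>
      rcases classify_vec k j hk hj' b hb with rfl | ⟨m', hm', rfl⟩
    · exact chain_single (z0v_mem k j hk hj')
    · exact hz0w m' hm'
    · exact chain_symm (hz0w m hm)
    · rcases le_total m m' with h | h
      · exact chain_wv k j hk hj' h4N m' hm' m h
      · exact chain_symm (chain_wv k j hk hj' h4N m hm m' h)
  -- lower bound
  have hlow : ∀ N ∈ {N | ∀ a ∈ Z, ∀ b ∈ Z, IsNChain Z N a b}, 3 * k - 3 - j ≤ N := by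
    intro N hN
    obtain ⟨l, h1, h2, h3, h4⟩ :=
      hN (z0v k j) (z0v_mem k j hk hj') (wv k j j) (wv_mem k j j hk hj' le_rfl)
    obtain ⟨y, hyZ, hyne, hyd⟩ :=
      escape l (wv k j j) h1 h2 (fun h => z0v_ne_wv k j j h.symm) h3 h4
    rcases classify_vec k j hk hj' y hyZ with rfl | ⟨m, hm, rfl⟩
    · exact absurd rfl hyne
    · rw [fdist_z0_wv k j m hk hj' hm] at hyd
      omega
  exact le_antisymm (Nat.sInf_le hmem) (le_csInf ⟨_, hmem⟩ hlow)
end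

section
/- Let S = ⟨n_1, n_2⟩ ⊂ ℕ be a numerical monoid minimally generated by two coprime integers 1 < n_1 < n_2. Then the set of catenary degrees of S is C(S) = {0, n_2}. -/
section Aux

lemma eq_pair (a : Fin 2 → ℕ) : a = ![a 0, a 1] := by
  funext i; fin_cases i <;> rfl

lemma mem_Zset_pair {n₁ n₂ p q n : ℕ} :
    ![p, q] ∈ Zset ![n₁, n₂] n ↔ p * n₁ + q * n₂ = n := by
  simp [Zset, Fin.sum_univ_two]

lemma fdist_pair (p q r s : ℕ) :
    fdist ![p, q] ![r, s] = max ((p - r) + (q - s)) ((r - p) + (s - q)) := by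
  simp [fdist, Fin.sum_univ_two]

lemma pair_inj {p q r s : ℕ} (h : (![p, q] : Fin 2 → ℕ) = ![r, s]) :
    p = r ∧ q = s :=
  ⟨congrFun h 0, congrFun h 1⟩

variable {n₁ n₂ : ℕ}

lemma key (h₂ : 0 < n₂) (hcop : Nat.Coprime n₁ n₂) {n p q r s : ℕ}
    (ha : p * n₁ + q * n₂ = n) (hb : r * n₁ + s * n₂ = n)
    (hlt : s < q) : n₁ + s ≤ q ∧ n₂ + p ≤ r := by
  have hq : s * n₂ < q * n₂ := (Nat.mul_lt_mul_right h₂).mpr hlt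
  have hpr : p * n₁ < r * n₁ := by omega
  have hpr' : p < r := Nat.lt_of_mul_lt_mul_right hpr
  have hkey : (r - p) * n₁ = (q - s) * n₂ := by
    rw [Nat.sub_mul, Nat.sub_mul]; omega
  have d1 : n₁ ∣ (q - s) :=
    hcop.dvd_of_dvd_mul_right ⟨r - p, by rw [← hkey]; ring⟩
  have d2 : n₂ ∣ (r - p) :=
    (hcop.symm).dvd_of_dvd_mul_right ⟨q - s, by rw [hkey]; ring⟩
  have l1 := Nat.le_of_dvd (by omega) d1
  have l2 := Nat.le_of_dvd (by omega) d2
  omega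

lemma eq_of_snd_eq (h₁ : 0 < n₁) {n p q r s : ℕ}
    (ha : p * n₁ + q * n₂ = n) (hb : r * n₁ + s * n₂ = n)
    (h : q = s) : (![p, q] : Fin 2 → ℕ) = ![r, s] := by
  subst h
  have h0 : p * n₁ = r * n₁ := by omega
  have : p = r := Nat.eq_of_mul_eq_mul_right h₁ h0
  rw [this]

lemma dist_lb (h₁ : 0 < n₁) (h₂ : 0 < n₂) (hcop : Nat.Coprime n₁ n₂) {n : ℕ}
    {a b : Fin 2 → ℕ} (ha : a ∈ Zset ![n₁, n₂] n) (hb : b ∈ Zset ![n₁, n₂] n)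
    (hne : a ≠ b) : n₂ ≤ fdist a b := by
  rw [eq_pair a] at ha hne ⊢
  rw [eq_pair b] at hb hne ⊢
  rw [mem_Zset_pair] at ha hb
  rw [fdist_pair]
  rcases lt_trichotomy (a 1) (b 1) with h | h | h
  · have := key h₂ hcop hb ha h
    omega
  · exact absurd (eq_of_snd_eq h₁ ha hb h) hne
  · have := key h₂ hcop ha hb h
    omega

lemma connect_down (h₁ : 0 < n₁) (h₁₂ : n₁ < n₂) (hcop : Nat.Coprime n₁ n₂) {n : ℕ} :
    ∀ m p q r s : ℕ, q ≤ m → p * n₁ + q * n₂ = n → r * n₁ + s * n₂ = n → s ≤ q →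
      Relation.ReflTransGen (fun x y => x ∈ Zset ![n₁, n₂] n ∧
        y ∈ Zset ![n₁, n₂] n ∧ fdist x y ≤ n₂) ![p, q] ![r, s] := by
  intro m
  induction m with
  | zero =>
    intro p q r s hm ha hb hba
    rw [eq_of_snd_eq h₁ ha hb (by omega)]
  | succ m ih =>
    intro p q r s hm ha hb hba
    rcases eq_or_lt_of_le hba with h | h
    · rw [eq_of_snd_eq h₁ ha hb h.symm]
    · obtain ⟨k1, k2⟩ := key (by omega) hcop ha hb h
      have ha' : (p + n₂) * n₁ + (q - n₁) * n₂ = n := by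
        rw [Nat.add_mul, Nat.sub_mul]
        have e : n₂ * n₁ = n₁ * n₂ := Nat.mul_comm _ _
        have : n₁ * n₂ ≤ q * n₂ := Nat.mul_le_mul_right _ (by omega)
        omega
      have hd : fdist ![p, q] ![p + n₂, q - n₁] ≤ n₂ := by
        rw [fdist_pair]; omega
      exact Relation.ReflTransGen.head
        ⟨mem_Zset_pair.mpr ha, mem_Zset_pair.mpr ha', hd⟩
        (ih (p + n₂) (q - n₁) r s (by omega) ha' hb (by omega))

lemma connect (h₁ : 0 < n₁) (h₁₂ : n₁ < n₂) (hcop : Nat.Coprime n₁ n₂) {n : ℕ}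
    {a b : Fin 2 → ℕ} (ha : a ∈ Zset ![n₁, n₂] n) (hb : b ∈ Zset ![n₁, n₂] n) :
    Relation.ReflTransGen (fun x y => x ∈ Zset ![n₁, n₂] n ∧
      y ∈ Zset ![n₁, n₂] n ∧ fdist x y ≤ n₂) a b := by
  have hsym : Symmetric (fun x y : Fin 2 → ℕ => x ∈ Zset ![n₁, n₂] n ∧
      y ∈ Zset ![n₁, n₂] n ∧ fdist x y ≤ n₂) := by
    intro x y ⟨hx, hy, hd⟩
    exact ⟨hy, hx, by rwa [fdist, max_comm]⟩
  rw [eq_pair a] at ha ⊢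
  rw [eq_pair b] at hb ⊢
  rw [mem_Zset_pair] at ha hb
  rcases le_total (b 1) (a 1) with h | h
  · exact connect_down h₁ h₁₂ hcop (a 1) _ _ _ _ le_rfl ha hb h
  · exact haveI : Std.Symm (fun x y : Fin 2 → ℕ => x ∈ Zset ![n₁, n₂] n ∧
        y ∈ Zset ![n₁, n₂] n ∧ fdist x y ≤ n₂) := ⟨fun _ _ h => hsym h⟩
      Relation.ReflTransGen.symmetric.symm _ _
      (connect_down h₁ h₁₂ hcop (b 1) _ _ _ _ le_rfl hb ha h)

lemma nchain_refl {k N : ℕ} {Z : Set (Fin k → ℕ)} {a : Fin k → ℕ} (ha : a ∈ Z) :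
    IsNChain Z N a a :=
  ⟨[a], rfl, rfl, by simpa using ha, List.isChain_singleton _⟩

lemma nchain_of_rtg {k N : ℕ} {Z : Set (Fin k → ℕ)} {a b : Fin k → ℕ}
    (h : Relation.ReflTransGen (fun x y => x ∈ Z ∧ y ∈ Z ∧ fdist x y ≤ N) a b)
    (ha : a ∈ Z) : IsNChain Z N a b := by
  induction h with
  | refl => exact nchain_refl ha
  | @tail c d h r ih =>
    obtain ⟨l, hh, hl, hm, hc⟩ := ih
    refine ⟨l ++ [d], ?_, ?_, ?_, ?_⟩
    · cases l with
      | nil => simp at hh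
      | cons x t => simpa using hh
    · simp
    · intro x hx
      rcases List.mem_append.mp hx with h' | h'
      · exact hm x h'
      · simp at h'; subst h'; exact r.2.1
    · rw [List.Chain', List.isChain_append]
      refine ⟨hc, by simp, ?_⟩
      intro x hx y hy
      rw [hl] at hx
      simp at hx hy
      subst hx; subst hy
      exact r.2.2

lemma chain_lb (h₁ : 0 < n₁) (h₂ : 0 < n₂) (hcop : Nat.Coprime n₁ n₂) {n N : ℕ} :
    ∀ l : List (Fin 2 → ℕ), ∀ a b : Fin 2 → ℕ,
      l.Chain' (fun x y => fdist x y ≤ N) → (∀ x ∈ l, x ∈ Zset ![n₁, n₂] n) →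
      l.head? = some a → l.getLast? = some b → a ≠ b → n₂ ≤ N := by
  intro l
  induction l with
  | nil => intro a b _ _ hh _ _; simp at hh
  | cons x t ih =>
    intro a b hc hm hh hl hne
    have hxa : x = a := by simpa using hh
    subst hxa
    cases t with
    | nil =>
      simp at hl
      exact absurd hl hne
    | cons y t' =>
      rw [List.Chain', List.isChain_cons_cons] at hc
      by_cases hxy : x = y
      · subst hxy
        refine ih x b hc.2 (fun z hz => hm z (List.mem_cons_of_mem _ hz)) rfl ?_ hne
        rw [← hl, List.getLast?_cons_cons]
      · have hx : x ∈ Zset ![n₁, n₂] n := hm x (by simp)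
        have hy : y ∈ Zset ![n₁, n₂] n := hm y (by simp)
        exact le_trans (dist_lb h₁ h₂ hcop hx hy hxy) hc.1

lemma catDeg_eq_zero {n : ℕ}
    (hu : ∀ a ∈ Zset ![n₁, n₂] n, ∀ b ∈ Zset ![n₁, n₂] n, a = b) :
    catDeg ![n₁, n₂] n = 0 := by
  apply Nat.sInf_eq_zero.mpr
  left
  intro a ha b hb
  rw [← hu a ha b hb]
  exact nchain_refl ha

lemma catDeg_eq_n₂ (h₁ : 0 < n₁) (h₁₂ : n₁ < n₂) (hcop : Nat.Coprime n₁ n₂) {n : ℕ}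
    {a b : Fin 2 → ℕ} (ha : a ∈ Zset ![n₁, n₂] n) (hb : b ∈ Zset ![n₁, n₂] n)
    (hne : a ≠ b) : catDeg ![n₁, n₂] n = n₂ := by
  have hmem : n₂ ∈ {N | ∀ x ∈ Zset ![n₁, n₂] n, ∀ y ∈ Zset ![n₁, n₂] n,
      IsNChain (Zset ![n₁, n₂] n) N x y} := by
    intro x hx y hy
    exact nchain_of_rtg (connect h₁ h₁₂ hcop hx hy) hx
  refine le_antisymm (Nat.sInf_le hmem) (le_csInf ⟨n₂, hmem⟩ ?_)
  intro N hN
  obtain ⟨l, hh, hl, hm, hc⟩ := hN a ha b hb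
  exact chain_lb h₁ (by omega) hcop l a b hc hm hh hl hne

end Aux

/-- For a numerical monoid S = ⟨n₁, n₂⟩ minimally generated by coprime
1 < n₁ < n₂, the set of catenary degrees is C(S) = {0, n₂}. -/
theorem catSet_two_generated (n₁ n₂ : ℕ) (h₁ : 1 < n₁) (h₁₂ : n₁ < n₂)
    (hcop : Nat.Coprime n₁ n₂) :
    CatSet ![n₁, n₂] = {0, n₂} := by
  have h₁' : 0 < n₁ := by omega
  ext c
  constructor
  · rintro ⟨n, ⟨a, ha⟩, rfl⟩
    by_cases hex : ∃ b ∈ Zset ![n₁, n₂] n, b ≠ a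
    · obtain ⟨b, hb, hne⟩ := hex
      right
      exact catDeg_eq_n₂ h₁' h₁₂ hcop hb ha hne
    · push_neg at hex
      left
      refine catDeg_eq_zero ?_
      intro x hx y hy
      rw [hex x hx, hex y hy]
  · rintro (rfl | hc)
    · refine ⟨0, ⟨![0, 0], mem_Zset_pair.mpr (by ring)⟩, ?_⟩
      refine catDeg_eq_zero ?_
      intro a ha b hb
      have hz : ∀ x : Fin 2 → ℕ, x ∈ Zset ![n₁, n₂] 0 → x = ![0, 0] := by
        intro x hx
        rw [eq_pair x] at hx ⊢
        rw [mem_Zset_pair] at hx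
        have e0 : x 0 * n₁ = 0 := by omega
        have e1 : x 1 * n₂ = 0 := by omega
        have : x 0 = 0 := by
          rcases Nat.mul_eq_zero.mp e0 with h | h
          · exact h
          · omega
        have : x 1 = 0 := by
          rcases Nat.mul_eq_zero.mp e1 with h | h
          · exact h
          · omega
        simp_all
      rw [hz a ha, hz b hb]
    · refine ⟨n₁ * n₂, ⟨![n₂, 0], mem_Zset_pair.mpr (by ring)⟩, ?_⟩
      rw [hc]
      have ha : (![n₂, 0] : Fin 2 → ℕ) ∈ Zset ![n₁, n₂] (n₁ * n₂) :=
        mem_Zset_pair.mpr (by ring)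
      have hb : (![0, n₁] : Fin 2 → ℕ) ∈ Zset ![n₁, n₂] (n₁ * n₂) :=
        mem_Zset_pair.mpr (by ring)
      have hne : (![n₂, 0] : Fin 2 → ℕ) ≠ ![0, n₁] := by
        intro h
        have := (pair_inj h).1
        omega
      exact catDeg_eq_n₂ h₁' h₁₂ hcop ha hb hne
end

section
/- Let G be a cyclic group of order n ≥ 4 with generator g, and let S = B(G) be the block monoid of zero-sum sequences over G. The element A = (2g)² g^(2n-4) ∈ S has exactly two factorizations into minimal zero-sum sequences, namely U·W and V², where U = g^n, V = (2g)g^(n-2), W = (2g)² g^(n-4); consequently c(A) = 2. -/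
open scoped Classical

/-- A sequence over `G` (a multiset of elements of `G`) is a minimal zero-sum
sequence if it is nonempty, has sum zero, and no proper nonempty subsequence
has sum zero. These are the irreducibles of the block monoid `B(G)`. -/
def IsMinZeroSum {G : Type*} [AddCommGroup G] (s : Multiset G) : Prop :=
  s ≠ 0 ∧ s.sum = 0 ∧ ∀ t ≤ s, t.sum = 0 → t = 0 ∨ t = s

/-- The set of factorizations of a zero-sum sequence `A` into minimal zero-sum
sequences: multisets of irreducibles of `B(G)` whose product (sum) is `A`. -/
def BFact {G : Type*} [AddCommGroup G] (A : Multiset G) :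
    Set (Multiset (Multiset G)) :=
  {F | (∀ s ∈ F, IsMinZeroSum s) ∧ F.sum = A}

/-- The distance between two factorizations: the maximum of the lengths of the
parts remaining after cancelling the common irreducibles. -/
noncomputable def bdist {G : Type*} [AddCommGroup G] (F F' : Multiset (Multiset G)) : ℕ :=
  max (F - F').card (F' - F).card

/-- There is an `N`-chain of factorizations within `Z` from `a` to `b`. -/
def BIsNChain {G : Type*} [AddCommGroup G] (Z : Set (Multiset (Multiset G)))
    (N : ℕ) (a b : Multiset (Multiset G)) : Prop :=
  ∃ l : List (Multiset (Multiset G)), l.head? = some a ∧ l.getLast? = some b ∧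
    (∀ x ∈ l, x ∈ Z) ∧ l.Chain' (fun x y => bdist x y ≤ N)

/-- The catenary degree of a zero-sum sequence `A` in the block monoid: the
least `N` such that any two factorizations of `A` are joined by an `N`-chain. -/
noncomputable def bCatDeg {G : Type*} [AddCommGroup G] (A : Multiset G) : ℕ :=
  sInf {N | ∀ F ∈ BFact A, ∀ F' ∈ BFact A, BIsNChain (BFact A) N F F'}

private def Mg {G : Type*} [AddCommGroup G] (g : G) (a b : ℕ) : Multiset G :=
  Multiset.replicate a ((2:ℕ) • g) + Multiset.replicate b g
section Aux
variable {G : Type*} [AddCommGroup G] (g : G)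

private lemma count_Mg (a b : ℕ) (x : G) :
    (Mg g a b).count x = (if (2:ℕ) • g = x then a else 0) + (if g = x then b else 0) := by
  simp [Mg, Multiset.count_replicate]

private lemma card_Mg (a b : ℕ) : Multiset.card (Mg g a b) = a + b := by
  simp [Mg]

private lemma sum_Mg (a b : ℕ) : (Mg g a b).sum = (2 * a + b) • g := by
  simp only [Mg, Multiset.sum_add, Multiset.sum_replicate]
  rw [smul_smul, ← add_smul, mul_comm]

private lemma Mg_add (a b c d : ℕ) : Mg g a b + Mg g c d = Mg g (a + c) (b + d) := by
  simp only [Mg, Multiset.replicate_add]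
  abel

private lemma Mg_smul (k a b : ℕ) : k • Mg g a b = Mg g (k * a) (k * b) := by
  simp only [Mg, nsmul_add, Multiset.nsmul_replicate]

private lemma Mg_zero_iff (a b : ℕ) : Mg g a b = 0 ↔ a = 0 ∧ b = 0 := by
  rw [← Multiset.card_eq_zero, card_Mg]
  omega

end Aux

section Aux2
variable {G : Type*} [AddCommGroup G] {g : G} (hne : (2:ℕ) • g ≠ g)
include hne

private lemma count_Mg_two (a b : ℕ) : (Mg g a b).count ((2:ℕ) • g) = a := by
  rw [count_Mg, if_pos rfl, if_neg (Ne.symm hne), add_zero]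

private lemma count_Mg_one (a b : ℕ) : (Mg g a b).count g = b := by
  rw [count_Mg, if_pos rfl, if_neg hne, zero_add]

private lemma Mg_inj {a b c d : ℕ} (h : Mg g a b = Mg g c d) : a = c ∧ b = d := by
  constructor
  · have := congrArg (Multiset.count ((2:ℕ) • g)) h
    rwa [count_Mg_two hne, count_Mg_two hne] at this
  · have := congrArg (Multiset.count g) h
    rwa [count_Mg_one hne, count_Mg_one hne] at this

omit hne in
private lemma Mg_mono {a b c d : ℕ} (hac : a ≤ c) (hbd : b ≤ d) :
    Mg g a b ≤ Mg g c d :=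
  add_le_add ((Multiset.replicate_le_replicate _).mpr hac)
    ((Multiset.replicate_le_replicate _).mpr hbd)

private lemma Mg_decomp {a b : ℕ} {t : Multiset G} (ht : t ≤ Mg g a b) :
    ∃ a' b', a' ≤ a ∧ b' ≤ b ∧ t = Mg g a' b' := by
  refine ⟨t.count ((2:ℕ) • g), t.count g, ?_, ?_, ?_⟩
  · have := Multiset.count_le_of_le ((2:ℕ) • g) ht
    rwa [count_Mg_two hne] at this
  · have := Multiset.count_le_of_le g ht
    rwa [count_Mg_one hne] at this
  · ext x
    rw [count_Mg]
    by_cases h2 : (2:ℕ) • g = x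
    · subst h2
      rw [if_pos rfl, if_neg (Ne.symm hne), add_zero]
    · rw [if_neg h2]
      by_cases h1 : g = x
      · subst h1
        rw [if_pos rfl, zero_add]
      · rw [if_neg h1, add_zero]
        have := Multiset.count_le_of_le x ht
        rw [count_Mg, if_neg h2, if_neg h1] at this
        omega

end Aux2

private lemma dvd_cases {n k : ℕ} (h : n ∣ k) (hk : k ≤ 2 * n) :
    k = 0 ∨ k = n ∨ k = 2 * n := by
  obtain ⟨c, rfl⟩ := h
  rcases Nat.eq_zero_or_pos n with rfl | hn
  · simp
  have hc : c ≤ 2 := by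
    by_contra hc
    push_neg at hc
    have : n * 3 ≤ n * c := Nat.mul_le_mul_left n hc
    omega
  interval_cases c <;> omega

/-- For G cyclic of order n ≥ 4 with generator g, the zero-sum sequence
A = (2g)²g^(2n-4) has exactly the two factorizations U·W and V², where
U = gⁿ, V = (2g)g^(n-2), W = (2g)²g^(n-4); consequently c(A) = 2. -/
theorem catDeg_two_example {G : Type*} [AddCommGroup G] [Fintype G] (n : ℕ)
    (hn : 4 ≤ n) (hcard : Fintype.card G = n) (g : G) (hg : addOrderOf g = n) :
    BFact (Multiset.replicate 2 ((2 : ℕ) • g) + Multiset.replicate (2 * n - 4) g) =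
      {({Multiset.replicate n g,
          Multiset.replicate 2 ((2 : ℕ) • g) + Multiset.replicate (n - 4) g} :
            Multiset (Multiset G)),
        Multiset.replicate 2 (((2 : ℕ) • g) ::ₘ Multiset.replicate (n - 2) g)} ∧
    bCatDeg (Multiset.replicate 2 ((2 : ℕ) • g) + Multiset.replicate (2 * n - 4) g) = 2 := by
  obtain ⟨m, rfl⟩ : ∃ m, n = m + 4 := ⟨n - 4, by omega⟩
  rw [show 2 * (m + 4) - 4 = 2 * m + 4 by omega, show m + 4 - 4 = m from by omega,
    show m + 4 - 2 = m + 2 by omega,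
    show Multiset.replicate (m + 4) g = Mg g 0 (m + 4) by simp [Mg],
    show ((2:ℕ) • g) ::ₘ Multiset.replicate (m + 2) g = Mg g 1 (m + 2) by
      rw [Mg, Multiset.replicate_one, Multiset.singleton_add],
    show Multiset.replicate 2 ((2:ℕ) • g) + Multiset.replicate m g = Mg g 2 m from rfl,
    show Multiset.replicate 2 ((2:ℕ) • g) + Multiset.replicate (2 * m + 4) g
      = Mg g 2 (2 * m + 4) from rfl]
  -- basic facts
  have hg0 : g ≠ 0 := by
    intro h
    rw [h, addOrderOf_zero] at hg
    omega
  have hne : (2:ℕ) • g ≠ g := by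
    intro h
    rw [two_nsmul, add_eq_right] at h
    exact hg0 h
  have hzero : ∀ k : ℕ, k • g = 0 ↔ (m + 4) ∣ k := by
    intro k
    rw [← addOrderOf_dvd_iff_nsmul_eq_zero, hg]
  have hsum0 : ∀ a b : ℕ, (Mg g a b).sum = 0 ↔ (m + 4) ∣ 2 * a + b := by
    intro a b
    rw [sum_Mg, hzero]
  -- minimality criterion
  have hminchar : ∀ a b : ℕ, ¬(a = 0 ∧ b = 0) → (m + 4) ∣ 2 * a + b →
      (∀ a' b', a' ≤ a → b' ≤ b → (m + 4) ∣ 2 * a' + b' →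
        (a' = 0 ∧ b' = 0) ∨ (a' = a ∧ b' = b)) →
      IsMinZeroSum (Mg g a b) := by
    intro a b h0 hs hm
    refine ⟨by rw [Ne, Mg_zero_iff]; exact h0, (hsum0 a b).mpr hs, ?_⟩
    intro t ht hts
    obtain ⟨a', b', ha', hb', rfl⟩ := Mg_decomp hne ht
    rcases hm a' b' ha' hb' ((hsum0 _ _).mp hts) with ⟨rfl, rfl⟩ | ⟨rfl, rfl⟩
    · exact Or.inl ((Mg_zero_iff g 0 0).mpr ⟨rfl, rfl⟩)
    · exact Or.inr rfl
  -- the three irreducibles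
  have hminU : IsMinZeroSum (Mg g 0 (m + 4)) := by
    refine hminchar _ _ (by omega) ⟨1, by ring⟩ ?_
    intro a' b' ha' hb' hd
    have := dvd_cases hd (by omega)
    omega
  have hminV : IsMinZeroSum (Mg g 1 (m + 2)) := by
    refine hminchar _ _ (by omega) ⟨1, by ring⟩ ?_
    intro a' b' ha' hb' hd
    have := dvd_cases hd (by omega)
    omega
  have hminW : IsMinZeroSum (Mg g 2 m) := by
    refine hminchar _ _ (by omega) ⟨1, by ring⟩ ?_
    intro a' b' ha' hb' hd
    have := dvd_cases hd (by omega)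
    omega
  -- classification of minimal subsequences of A
  have hclassify : ∀ t ≤ Mg g 2 (2 * m + 4), IsMinZeroSum t →
      t = Mg g 0 (m + 4) ∨ t = Mg g 1 (m + 2) ∨ t = Mg g 2 m := by
    intro t ht hmin
    obtain ⟨a, b, ha, hb, rfl⟩ := Mg_decomp hne ht
    obtain ⟨hne0, hsum, hminp⟩ := hmin
    rw [Ne, Mg_zero_iff] at hne0
    rw [hsum0] at hsum
    have hcase := dvd_cases hsum (by omega)
    rcases hcase with h | h | h
    · omega
    · -- 2a + b = m + 4
      interval_cases a
      · left; congr 1; omega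
      · right; left; congr 1; omega
      · right; right; congr 1; omega
    · -- 2a + b = 2m + 8 forces a = 2, b = 2m + 4; contradiction with minimality
      exfalso
      have ha2 : a = 2 := by omega
      have hb2 : b = 2 * m + 4 := by omega
      subst ha2; subst hb2
      have hle : Mg g 0 (m + 4) ≤ Mg g 2 (2 * m + 4) := Mg_mono (by omega) (by omega)
      rcases hminp _ hle ((hsum0 _ _).mpr ⟨1, by ring⟩) with h0 | heq
      · rw [Mg_zero_iff] at h0; omega
      · exact absurd (Mg_inj hne heq).1 (by omega)
  have hMgext : ∀ {a b c d : ℕ}, a = c → b = d → Mg g a b = Mg g c d := by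
    rintro a b c d rfl rfl; rfl
  set U := Mg g 0 (m + 4) with hUdef
  set V := Mg g 1 (m + 2) with hVdef
  set W := Mg g 2 m with hWdef
  set A := Mg g 2 (2 * m + 4) with hAdef
  have hUV : U ≠ V := fun h => by have := (Mg_inj hne h).1; omega
  have hUW : U ≠ W := fun h => by have := (Mg_inj hne h).1; omega
  have hVW : V ≠ W := fun h => by have := (Mg_inj hne h).1; omega
  have hF1 : ({U, W} : Multiset (Multiset G)) ∈ BFact A := by
    constructor
    · intro s hs
      rcases Multiset.mem_cons.mp hs with rfl | hs
      · exact hminU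
      · rw [Multiset.mem_singleton.mp hs]; exact hminW
    · rw [Multiset.insert_eq_cons, Multiset.sum_cons, Multiset.sum_singleton,
        hUdef, hWdef, Mg_add]
      exact hMgext (by omega) (by omega)
  have hF2 : Multiset.replicate 2 V ∈ BFact A := by
    constructor
    · intro s hs
      rw [Multiset.eq_of_mem_replicate hs]; exact hminV
    · rw [Multiset.sum_replicate, hVdef, Mg_smul]
      exact hMgext (by omega) (by omega)
  have hfact : ∀ F ∈ BFact A, F = ({U, W} : Multiset (Multiset G)) ∨
      F = Multiset.replicate 2 V := by
    rintro F ⟨hFmin, hFsum⟩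
    have hmem : ∀ s ∈ F, s = U ∨ s = V ∨ s = W := by
      intro s hs
      exact hclassify s
        (hFsum ▸ Multiset.single_le_sum (fun x _ => Multiset.zero_le x) s hs)
        (hFmin s hs)
    have hF : F = Multiset.replicate (F.count U) U + Multiset.replicate (F.count V) V
        + Multiset.replicate (F.count W) W := by
      ext x
      simp only [Multiset.count_add, Multiset.count_replicate]
      by_cases hxU : U = x
      · subst hxU
        rw [if_pos rfl, if_neg (Ne.symm hUV), if_neg (Ne.symm hUW)]
        omega
      · rw [if_neg hxU]
        by_cases hxV : V = x
        · subst hxV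
          rw [if_pos rfl, if_neg (Ne.symm hVW)]
          omega
        · rw [if_neg hxV]
          by_cases hxW : W = x
          · subst hxW
            rw [if_pos rfl]
            omega
          · rw [if_neg hxW]
            simp only [zero_add, add_zero]
            exact Multiset.count_eq_zero.mpr fun hx => by
              rcases hmem x hx with rfl | rfl | rfl
              exacts [hxU rfl, hxV rfl, hxW rfl]
    have hsum2 := hFsum
    rw [hF, Multiset.sum_add, Multiset.sum_add, Multiset.sum_replicate,
      Multiset.sum_replicate, Multiset.sum_replicate, hUdef, hVdef, hWdef,
      Mg_smul, Mg_smul, Mg_smul, Mg_add, Mg_add, hAdef] at hsum2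
    obtain ⟨e1, e2⟩ := Mg_inj hne hsum2
    rw [← hUdef, ← hVdef, ← hWdef] at e1 e2
    have hw : F.count W = 0 ∨ F.count W = 1 := by omega
    rcases hw with hw | hw
    · have hv : F.count V = 2 := by omega
      have hu : F.count U = 0 := by
        rw [hv, hw] at e2
        have h0 : F.count U * (m + 4) = 0 := by omega
        rcases Nat.mul_eq_zero.mp h0 with h | h
        · exact h
        · omega
      right
      rw [hF, hu, hv, hw]
      simp
    · have hv : F.count V = 0 := by omega
      have hu : F.count U = 1 := by
        rw [hv, hw] at e2
        have h0 : F.count U * (m + 4) = 1 * (m + 4) := by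
          rw [one_mul]; omega
        exact Nat.eq_of_mul_eq_mul_right (by omega) h0
      left
      rw [hF, hu, hv, hw]
      simp [Multiset.replicate_one, Multiset.singleton_add, Multiset.insert_eq_cons]
  have hset : BFact A = {({U, W} : Multiset (Multiset G)), Multiset.replicate 2 V} := by
    ext F
    simp only [Set.mem_insert_iff, Set.mem_singleton_iff]
    constructor
    · exact fun h => hfact F h
    · rintro (rfl | rfl)
      · exact hF1
      · exact hF2
  refine ⟨hset, ?_⟩
  -- the two factorizations are distinct
  have hF1F2 : ({U, W} : Multiset (Multiset G)) ≠ Multiset.replicate 2 V := by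
    intro h
    have hUmem : U ∈ Multiset.replicate 2 V := h ▸ (by simp)
    exact hUV (Multiset.eq_of_mem_replicate hUmem)
  have hVnotin : Multiset.count V ({U, W} : Multiset (Multiset G)) = 0 := by
    rw [Multiset.count_eq_zero]
    intro h
    rcases Multiset.mem_cons.mp h with h1 | h1
    · exact hUV h1.symm
    · exact hVW (Multiset.mem_singleton.mp h1)
  have hsub1 : ({U, W} : Multiset (Multiset G)) - Multiset.replicate 2 V
      = ({U, W} : Multiset (Multiset G)) := by
    ext x
    rw [Multiset.count_sub, Multiset.count_replicate]
    by_cases hx : V = x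
    · subst hx
      rw [hVnotin, if_pos rfl]
    · rw [if_neg hx, Nat.sub_zero]
  have hsub2 : Multiset.replicate 2 V - ({U, W} : Multiset (Multiset G))
      = Multiset.replicate 2 V := by
    ext x
    rw [Multiset.count_sub, Multiset.count_replicate]
    by_cases hx : V = x
    · rw [if_pos hx, ← hx, hVnotin]
    · rw [if_neg hx]
      simp
  have hcard1 : Multiset.card ({U, W} : Multiset (Multiset G)) = 2 := by
    simp [Multiset.insert_eq_cons]
  have hcard2 : Multiset.card (Multiset.replicate 2 V) = 2 := by simp
  have hbd12 : bdist ({U, W} : Multiset (Multiset G)) (Multiset.replicate 2 V) = 2 := by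
    rw [bdist, hsub1, hsub2, hcard1, hcard2]
    simp
  have hbd21 : bdist (Multiset.replicate 2 V) ({U, W} : Multiset (Multiset G)) = 2 := by
    rw [bdist, hsub1, hsub2, hcard1, hcard2]
    simp
  have hbd0 : ∀ x : Multiset (Multiset G), bdist x x = 0 := by
    intro x
    simp [bdist]
  have h2mem : 2 ∈ {N | ∀ F ∈ BFact A, ∀ F' ∈ BFact A, BIsNChain (BFact A) N F F'} := by
    intro F hF F' hF'
    refine ⟨[F, F'], rfl, by simp, ?_, ?_⟩
    · intro x hx
      rcases List.mem_pair.mp hx with rfl | rfl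
      · exact hF
      · exact hF'
    · unfold List.Chain'; rw [List.isChain_pair]
      rw [hset] at hF hF'
      rcases hF with rfl | hF <;> rcases hF' with rfl | hF'
      · rw [hbd0]; omega
      · rw [Set.mem_singleton_iff] at hF'; subst hF'; rw [hbd12]
      · rw [Set.mem_singleton_iff] at hF; subst hF; rw [hbd21]
      · rw [Set.mem_singleton_iff] at hF hF'; subst hF; subst hF'; rw [hbd0]; omega
  have hlb : ∀ k ∈ {N | ∀ F ∈ BFact A, ∀ F' ∈ BFact A, BIsNChain (BFact A) N F F'},
      2 ≤ k := by
    intro k hk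
    by_contra hk2
    push_neg at hk2
    obtain ⟨l, hhd, hlast, hmem, hch⟩ :=
      hk ({U, W} : Multiset (Multiset G)) hF1 (Multiset.replicate 2 V) hF2
    have key : ∀ l : List (Multiset (Multiset G)),
        l.Chain' (fun x y => bdist x y ≤ k) → (∀ x ∈ l, x ∈ BFact A) →
        l.head? = some ({U, W} : Multiset (Multiset G)) →
        l.getLast? = some ({U, W} : Multiset (Multiset G)) := by
      intro l
      induction l with
      | nil => intro _ _ h; simp at h
      | cons a t ih =>
        intro hch hmem' hhd'
        have ha : a = ({U, W} : Multiset (Multiset G)) := by simpa using hhd'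
        subst ha
        cases t with
        | nil => simp
        | cons b t' =>
          unfold List.Chain' at hch; rw [List.isChain_cons_cons] at hch
          have hb : b ∈ BFact A := hmem' b (by simp)
          rw [hset] at hb
          have hbeq : b = ({U, W} : Multiset (Multiset G)) := by
            rcases hb with rfl | hb2
            · rfl
            · rw [Set.mem_singleton_iff] at hb2
              subst hb2
              rw [hbd12] at hch
              omega
          subst hbeq
          rw [List.getLast?_cons_cons]
          exact ih hch.2 (fun x hx => hmem' x (List.mem_cons_of_mem _ hx)) rfl
    have hlast' := key l hch hmem hhd
    rw [hlast] at hlast'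
    exact hF1F2 (Option.some.inj hlast').symm
  exact le_antisymm (Nat.sInf_le h2mem) (le_csInf ⟨2, h2mem⟩ hlb)
end

section
/- Let G be a cyclic group of order n ≥ 4 with generator g, fix j with 3 ≤ j ≤ n, and set h = (j-1)g. The zero-sum sequence A = (-g)^(j-1) g^n h has exactly two factorizations into minimal zero-sum sequences, namely U·W and V^(j-1)·X, where U = g^n, V = g(-g), W = (-g)^(j-1) h, X = g^(n-j+1) h; consequently the catenary degree of A equals j. -/
open scoped Classical

namespace CatAux
open Multiset

variable {α : Type*} [DecidableEq α]

lemma mem_le_sum {F : Multiset (Multiset α)} {s : Multiset α} (h : s ∈ F) : s ≤ F.sum := by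
  have h2 := Multiset.cons_erase h
  calc s ≤ s + (F.erase s).sum := Multiset.le_add_right _ _
    _ = F.sum := by rw [← Multiset.sum_cons, h2]

lemma decomp2 {s : Multiset α} {x y : α} (hxy : x ≠ y)
    (h : ∀ a ∈ s, a = x ∨ a = y) :
    s = replicate (s.count x) x + replicate (s.count y) y := by
  ext a
  rw [count_add, count_replicate, count_replicate]
  by_cases hax : a = x
  · subst hax; rw [if_pos rfl, if_neg (Ne.symm hxy), add_zero]
  · by_cases hay : a = y
    · subst hay; rw [if_pos rfl, if_neg hxy, zero_add]
    · have hns : a ∉ s := fun hm => by rcases h a hm with h | h <;> simp_all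
      rw [if_neg (fun e => hax e.symm), if_neg (fun e => hay e.symm), count_eq_zero.2 hns, add_zero]

lemma decomp3 {s : Multiset α} {x y z : α} (hxy : x ≠ y) (hxz : x ≠ z) (hyz : y ≠ z)
    (h : ∀ a ∈ s, a = x ∨ a = y ∨ a = z) :
    s = replicate (s.count x) x + replicate (s.count y) y + replicate (s.count z) z := by
  ext a
  rw [count_add, count_add, count_replicate, count_replicate, count_replicate]
  by_cases hax : a = x
  · subst hax; rw [if_pos rfl, if_neg (Ne.symm hxy), if_neg (Ne.symm hxz)]; ring
  · by_cases hay : a = y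
    · subst hay; rw [if_pos rfl, if_neg hxy, if_neg (Ne.symm hyz)]; ring
    · by_cases haz : a = z
      · subst haz; rw [if_pos rfl, if_neg hxz, if_neg hyz]; ring
      · have hns : a ∉ s := fun hm => by rcases h a hm with h | h | h <;> simp_all
        rw [if_neg (fun e => hax e.symm), if_neg (fun e => hay e.symm), if_neg (fun e => haz e.symm), count_eq_zero.2 hns]

lemma decomp4 {s : Multiset α} {x y z w : α} (hxy : x ≠ y) (hxz : x ≠ z) (hxw : x ≠ w)
    (hyz : y ≠ z) (hyw : y ≠ w) (hzw : z ≠ w)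
    (h : ∀ a ∈ s, a = x ∨ a = y ∨ a = z ∨ a = w) :
    s = replicate (s.count x) x + replicate (s.count y) y + replicate (s.count z) z
        + replicate (s.count w) w := by
  ext a
  rw [count_add, count_add, count_add, count_replicate, count_replicate, count_replicate,
    count_replicate]
  by_cases hax : a = x
  · subst hax; rw [if_pos rfl, if_neg (Ne.symm hxy), if_neg (Ne.symm hxz), if_neg (Ne.symm hxw)]; ring
  · by_cases hay : a = y
    · subst hay; rw [if_pos rfl, if_neg hxy, if_neg (Ne.symm hyz), if_neg (Ne.symm hyw)]; ring
    · by_cases haz : a = z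
      · subst haz; rw [if_pos rfl, if_neg hxz, if_neg hyz, if_neg (Ne.symm hzw)]; ring
      · by_cases haw : a = w
        · subst haw
          rw [if_pos rfl, if_neg hxw, if_neg hyw, if_neg hzw]; ring
        · have hns : a ∉ s := fun hm => by rcases h a hm with h | h | h | h <;> simp_all
          rw [if_neg (fun e => hax e.symm), if_neg (fun e => hay e.symm), if_neg (fun e => haz e.symm), if_neg (fun e => haw e.symm), count_eq_zero.2 hns]

lemma int_dvd_zero_of_lt {n k : ℤ} (hd : n ∣ k) (h0 : 0 ≤ k) (h1 : k < n) : k = 0 := by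
  rcases h0.eq_or_lt with h | h
  · omega
  · exact absurd (Int.le_of_dvd h hd) (by omega)

lemma int_dvd_eq_of_le {n k : ℤ} (hd : n ∣ k) (h0 : 0 < k) (h1 : k ≤ n) : k = n :=
  le_antisymm h1 (Int.le_of_dvd h0 hd)

lemma int_dvd_eq_of_lt_two {n k : ℤ} (hd : n ∣ k) (h0 : 0 < k) (h1 : k < 2 * n) : k = n := by
  have h2 : n ≤ k := Int.le_of_dvd h0 hd
  have h3 : n ∣ k - n := (dvd_sub_right hd).2 dvd_rfl
  have := int_dvd_zero_of_lt h3 (by omega) (by omega)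
  omega

end CatAux

-- Basic facts about g, h and minimality of U, V, W, X
namespace CatAux
open Multiset

variable {G : Type*} [AddCommGroup G] {n j : ℕ} {g : G}

lemma zsmul_zero_iff (hg : addOrderOf g = n) (k : ℤ) : k • g = 0 ↔ (n:ℤ) ∣ k := by
  rw [← hg]; exact addOrderOf_dvd_iff_zsmul_eq_zero.symm

lemma sum_abe (g : G) (a b e k : ℕ) :
    ((Multiset.replicate a g + Multiset.replicate b (-g)) + Multiset.replicate e (k • g)).sum
      = ((a:ℤ) - (b:ℤ) + (e:ℤ) * (k:ℤ)) • g := by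
  simp only [Multiset.sum_add, Multiset.sum_replicate, ← natCast_zsmul, smul_neg, smul_smul]
  module

lemma g_ne_zero (hn : 4 ≤ n) (hg : addOrderOf g = n) : g ≠ 0 := by
  intro h
  rw [h, addOrderOf_zero] at hg
  omega

lemma g_ne_neg (hn : 4 ≤ n) (hg : addOrderOf g = n) : g ≠ -g := by
  intro h
  have h2 : (2:ℤ) • g = 0 := by
    have : g + g = 0 := by nth_rewrite 2 [h]; simp
    rw [two_zsmul, this]
  rw [zsmul_zero_iff hg] at h2
  have := Int.le_of_dvd (by norm_num) h2
  omega

lemma nsmul_zero_iff (hg : addOrderOf g = n) (k : ℕ) : k • g = 0 ↔ n ∣ k := by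
  rw [← hg]; exact addOrderOf_dvd_iff_nsmul_eq_zero.symm

lemma h_ne_g (hn : 4 ≤ n) (hg : addOrderOf g = n) (hj3 : 3 ≤ j) (hjn : j ≤ n) :
    (j - 1 : ℕ) • g ≠ g := by
  intro h
  rw [show j - 1 = (j - 2) + 1 by omega, succ_nsmul, add_eq_right] at h
  rw [nsmul_zero_iff hg] at h
  have := Nat.le_of_dvd (by omega) h
  omega

lemma h_eq_neg_iff (hn : 4 ≤ n) (hg : addOrderOf g = n) (hj3 : 3 ≤ j) (hjn : j ≤ n) :
    (j - 1 : ℕ) • g = -g ↔ j = n := by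
  constructor
  · intro h
    have hz : j • g = 0 := by
      rw [show j = (j - 1) + 1 by omega, succ_nsmul, h]
      abel
    rw [nsmul_zero_iff hg] at hz
    have := Nat.le_of_dvd (by omega) hz
    omega
  · rintro rfl
    have hz : ((j - 1) + 1) • g = 0 := by
      rw [show (j - 1) + 1 = j by omega]
      exact (nsmul_zero_iff hg j).2 dvd_rfl
    rw [succ_nsmul] at hz
    exact eq_neg_of_add_eq_zero_left hz

end CatAux

namespace CatAux
open Multiset

variable {G : Type*} [AddCommGroup G] {n j : ℕ} {g : G}

lemma sum_ab (g : G) (a b : ℕ) :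
    (Multiset.replicate a g + Multiset.replicate b (-g)).sum = ((a:ℤ) - (b:ℤ)) • g := by
  simp only [Multiset.sum_add, Multiset.sum_replicate, ← natCast_zsmul, smul_neg]
  module

lemma dvd_sub_nat {a b : ℕ} (hn : 4 ≤ n) (hd : (n:ℤ) ∣ ((a:ℤ) - (b:ℤ))) (ha : a < n)
    (hb : b < n) : a = b := by
  rcases le_total (a:ℤ) (b:ℤ) with h | h
  · have h2 : (n:ℤ) ∣ ((b:ℤ) - a) := by
      have := dvd_neg.mpr hd
      rwa [neg_sub] at this
    have := int_dvd_zero_of_lt h2 (by omega) (by omega)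
    omega
  · have := int_dvd_zero_of_lt hd (by omega) (by omega)
    omega

lemma minU (hn : 4 ≤ n) (hg : addOrderOf g = n) :
    IsMinZeroSum (Multiset.replicate n g : Multiset G) := by
  refine ⟨?_, ?_, ?_⟩
  · intro hz
    have := congrArg Multiset.card hz
    simp [Multiset.card_replicate] at this
    omega
  · rw [Multiset.sum_replicate]
    exact (nsmul_zero_iff hg n).2 dvd_rfl
  · intro t ht hts
    rw [Multiset.le_replicate_iff] at ht
    obtain ⟨k, hk, rfl⟩ := ht
    rw [Multiset.sum_replicate, nsmul_zero_iff hg] at hts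
    rcases Nat.eq_zero_or_pos k with h | h
    · left; simp [h]
    · right
      have := Nat.le_of_dvd h hts
      rw [show k = n by omega]

lemma minV (hn : 4 ≤ n) (hg : addOrderOf g = n) :
    IsMinZeroSum ({g, -g} : Multiset G) := by
  have hne := g_ne_neg hn hg
  refine ⟨by simp, by simp, ?_⟩
  intro t ht hts
  have hmem : ∀ a ∈ t, a = g ∨ a = -g := by
    intro a ha
    have := Multiset.mem_of_le ht ha
    simpa using this
  have hd := decomp2 hne hmem
  set a := t.count g with ha
  set b := t.count (-g) with hb
  have hale : a ≤ 1 := by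
    have := Multiset.count_le_of_le g ht
    simpa [Multiset.count_singleton, hne] using this
  have hble : b ≤ 1 := by
    have := Multiset.count_le_of_le (-g) ht
    simpa [Multiset.count_singleton, Ne.symm hne] using this
  rw [hd, sum_ab, zsmul_zero_iff hg] at hts
  have hab : a = b := dvd_sub_nat hn hts (by omega) (by omega)
  rcases Nat.eq_zero_or_pos a with h | h
  · left; rw [hd, h, ← hab, h]; simp
  · right
    rw [hd, ← hab, show a = 1 by omega]
    simp [Multiset.replicate_one, Multiset.singleton_add]

lemma minW (hn : 4 ≤ n) (hg : addOrderOf g = n) (hj3 : 3 ≤ j) (hjn : j ≤ n) :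
    IsMinZeroSum (Multiset.replicate (j - 1) (-g) + {(j - 1 : ℕ) • g} : Multiset G) := by
  refine ⟨by simp, ?_, ?_⟩
  · rw [Multiset.sum_add, Multiset.sum_replicate, Multiset.sum_singleton, smul_neg]
    abel
  · intro t ht hts
    by_cases hcase : (j - 1 : ℕ) • g = -g
    · -- j = n, the whole thing is replicate n (-g)
      have hW : (Multiset.replicate (j - 1) (-g) + {(j - 1 : ℕ) • g} : Multiset G)
          = Multiset.replicate j (-g) := by
        rw [hcase, ← Multiset.replicate_one (-g), ← Multiset.replicate_add,
          show j - 1 + 1 = j by omega]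
      rw [hW] at ht ⊢
      rw [Multiset.le_replicate_iff] at ht
      obtain ⟨k, hk, rfl⟩ := ht
      have hjeq : j = n := (h_eq_neg_iff hn hg hj3 hjn).1 hcase
      rw [Multiset.sum_replicate] at hts
      have hz : k • g = 0 := by
        have : -(k • g) = 0 := by rw [← smul_neg, hts]
        simpa using this
      rw [nsmul_zero_iff hg] at hz
      rcases Nat.eq_zero_or_pos k with h | h
      · left; simp [h]
      · right
        have := Nat.le_of_dvd h hz
        rw [show k = j by omega]
    · -- h ≠ -g
      have hmem : ∀ a ∈ t, a = -g ∨ a = (j - 1 : ℕ) • g := by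
        intro a ha
        have := Multiset.mem_of_le ht ha
        simp only [Multiset.mem_add, Multiset.mem_replicate, Multiset.mem_singleton] at this
        tauto
      have hd := decomp2 (fun e => hcase e.symm) hmem
      set b := t.count (-g) with hb
      set e := t.count ((j - 1 : ℕ) • g) with he
      have hble : b ≤ j - 1 := by
        have := Multiset.count_le_of_le (-g) ht
        simpa [Multiset.count_replicate, Multiset.count_singleton,
          Ne.symm hcase] using this
      have hele : e ≤ 1 := by
        have := Multiset.count_le_of_le ((j - 1 : ℕ) • g) ht
        simpa [Multiset.count_replicate, Multiset.count_singleton,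
          Ne.symm hcase] using this
      have hsum : t.sum = ((0:ℤ) - (b:ℤ) + (e:ℤ) * ((j - 1 : ℕ):ℤ)) • g := by
        rw [hd]
        have := sum_abe g 0 b e (j - 1)
        simpa using this
      rw [hsum, zsmul_zero_iff hg] at hts
      rcases Nat.lt_or_ge e 1 with h1 | h1
      · -- e = 0 : then n ∣ -b, so b = 0, t = 0
        have he0 : e = 0 := by omega
        rw [he0] at hts
        have h2 : (n:ℤ) ∣ (b:ℤ) := by
          have := dvd_neg.mpr hts
          simpa using this
        have hb0 : b = 0 := by
          have := int_dvd_zero_of_lt h2 (by omega) (by omega)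
          omega
        left
        rw [hd, hb0, he0]; simp
      · -- e = 1 : then n ∣ (j-1) - b, so b = j-1, t = W
        have he1 : e = 1 := by omega
        rw [he1] at hts
        have hbj : b = j - 1 := by
          have := int_dvd_zero_of_lt hts (by omega) (by omega)
          omega
        right
        rw [hd, hbj, he1]
        simp [Multiset.replicate_one]

lemma minX (hn : 4 ≤ n) (hg : addOrderOf g = n) (hj3 : 3 ≤ j) (hjn : j ≤ n) :
    IsMinZeroSum (Multiset.replicate (n - j + 1) g + {(j - 1 : ℕ) • g} : Multiset G) := by
  have hgh : g ≠ (j - 1 : ℕ) • g := fun e => h_ne_g hn hg hj3 hjn e.symm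
  refine ⟨by simp, ?_, ?_⟩
  · have : (Multiset.replicate (n - j + 1) g + {(j - 1 : ℕ) • g} : Multiset G).sum
        = (((n - j + 1 : ℕ):ℤ) + ((j - 1 : ℕ):ℤ)) • g := by
      rw [Multiset.sum_add, Multiset.sum_replicate, Multiset.sum_singleton,
        add_zsmul, natCast_zsmul, natCast_zsmul]
    rw [this, zsmul_zero_iff hg]
    exact ⟨1, by push_cast; omega⟩
  · intro t ht hts
    have hmem : ∀ a ∈ t, a = g ∨ a = (j - 1 : ℕ) • g := by
      intro a ha
      have := Multiset.mem_of_le ht ha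
      simp only [Multiset.mem_add, Multiset.mem_replicate, Multiset.mem_singleton] at this
      tauto
    have hd := decomp2 hgh hmem
    set a := t.count g with ha
    set e := t.count ((j - 1 : ℕ) • g) with he
    have hale : a ≤ n - j + 1 := by
      have := Multiset.count_le_of_le g ht
      simpa [Multiset.count_replicate, Multiset.count_singleton, hgh] using this
    have hcX : Multiset.count ((j - 1 : ℕ) • g)
        (Multiset.replicate (n - j + 1) g + {(j - 1 : ℕ) • g}) = 1 := by
      rw [Multiset.count_add, Multiset.count_replicate, Multiset.count_singleton,
        if_neg hgh, if_pos rfl]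
    have hele : e ≤ 1 := le_trans (Multiset.count_le_of_le _ ht) (le_of_eq hcX)
    have hsum : t.sum = ((a:ℤ) - (0:ℤ) + (e:ℤ) * ((j - 1 : ℕ):ℤ)) • g := by
      rw [hd]
      have := sum_abe g a 0 e (j - 1)
      simpa using this
    rw [hsum, zsmul_zero_iff hg] at hts
    rcases Nat.lt_or_ge e 1 with h1 | h1
    · have he0 : e = 0 := by omega
      rw [he0] at hts
      have ha0 : a = 0 := by
        have := int_dvd_zero_of_lt hts (by omega) (by omega)
        omega
      left
      rw [hd, ha0, he0]; simp
    · have he1 : e = 1 := by omega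
      rw [he1] at hts
      have han : a = n - j + 1 := by
        have := int_dvd_eq_of_le hts (by omega) (by omega)
        omega
      right
      rw [hd, han, he1]
      simp [Multiset.replicate_one]

end CatAux

namespace CatAux
open Multiset

variable {G : Type*} [AddCommGroup G] {n j : ℕ} {g : G}

lemma count_pair_left {α : Type*} [DecidableEq α] {x y : α} (hxy : x ≠ y) :
    Multiset.count x ({x, y} : Multiset α) = 1 := by
  simp [Multiset.insert_eq_cons, Multiset.count_cons, Multiset.count_singleton, hxy]

lemma count_pair_right {α : Type*} [DecidableEq α] {x y : α} (hxy : x ≠ y) :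
    Multiset.count y ({x, y} : Multiset α) = 1 := by
  simp [Multiset.insert_eq_cons, Multiset.count_cons, Multiset.count_singleton, Ne.symm hxy]

/-- Any minimal zero-sum subsequence of `A` is `U`, `V`, `W` or `X`. -/
lemma classify (hn : 4 ≤ n) (hg : addOrderOf g = n) (hj3 : 3 ≤ j) (hjn : j ≤ n)
    {s : Multiset G}
    (hs : s ≤ Multiset.replicate (j - 1) (-g) + Multiset.replicate n g + {(j - 1 : ℕ) • g})
    (hmin : IsMinZeroSum s) :
    s = Multiset.replicate n g ∨ s = ({g, -g} : Multiset G) ∨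
    s = Multiset.replicate (j - 1) (-g) + {(j - 1 : ℕ) • g} ∨
    s = Multiset.replicate (n - j + 1) g + {(j - 1 : ℕ) • g} := by
  classical
  obtain ⟨hne, hsum, hminl⟩ := hmin
  have hgg : g ≠ -g := g_ne_neg hn hg
  have hgh : g ≠ (j - 1 : ℕ) • g := fun e => h_ne_g hn hg hj3 hjn e.symm
  -- Case: both g and -g occur in s, forcing s = V
  by_cases hboth : 0 < s.count g ∧ 0 < s.count (-g)
  · right; left
    have hVle : ({g, -g} : Multiset G) ≤ s := by
      rw [Multiset.le_iff_count]
      intro x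
      by_cases h1 : x = g
      · subst h1; rw [count_pair_left hgg]; omega
      · by_cases h2 : x = -g
        · subst h2; rw [count_pair_right hgg]; omega
        · have : x ∉ ({g, -g} : Multiset G) := by simp [h1, h2]
          rw [Multiset.count_eq_zero.2 this]; omega
    rcases hminl _ hVle (by simp) with h | h
    · exact absurd h (by simp)
    · exact h.symm
  -- Case: g or -g missing
  · have hzero : s.count g = 0 ∨ s.count (-g) = 0 := by omega
    by_cases hjlt : j < n
    · -- here g, -g, h are pairwise distinct
      have hngh : -g ≠ (j - 1 : ℕ) • g := by
        intro e
        exact absurd ((h_eq_neg_iff hn hg hj3 hjn).1 e.symm) (by omega)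
      have hmem : ∀ x ∈ s, x = g ∨ x = -g ∨ x = (j - 1 : ℕ) • g := by
        intro x hx
        have := Multiset.mem_of_le hs hx
        simp only [Multiset.mem_add, Multiset.mem_replicate, Multiset.mem_singleton] at this
        tauto
      have hd := decomp3 hgg hgh hngh hmem
      set a := s.count g with ha
      set b := s.count (-g) with hb
      set e := s.count ((j - 1 : ℕ) • g) with hee
      -- counts in A
      have hale : a ≤ n := by
        have h1 := Multiset.count_le_of_le g hs
        rw [Multiset.count_add, Multiset.count_add, Multiset.count_replicate,
          Multiset.count_replicate, Multiset.count_singleton, if_neg (Ne.symm hgg),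
          if_pos rfl, if_neg hgh] at h1
        omega
      have hble : b ≤ j - 1 := by
        have h1 := Multiset.count_le_of_le (-g) hs
        rw [Multiset.count_add, Multiset.count_add, Multiset.count_replicate,
          Multiset.count_replicate, Multiset.count_singleton, if_pos rfl,
          if_neg hgg, if_neg hngh] at h1
        omega
      have hele : e ≤ 1 := by
        have h1 := Multiset.count_le_of_le ((j - 1 : ℕ) • g) hs
        rw [Multiset.count_add, Multiset.count_add, Multiset.count_replicate,
          Multiset.count_replicate, Multiset.count_singleton, if_neg hngh,
          if_neg hgh, if_pos rfl] at h1
        omega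
      have hdvd : (n:ℤ) ∣ ((a:ℤ) - (b:ℤ) + (e:ℤ) * ((j - 1 : ℕ):ℤ)) := by
        rw [← zsmul_zero_iff hg, ← sum_abe g a b e (j - 1), ← hd]
        exact hsum
      rcases Nat.lt_or_ge e 1 with h1 | h1
      · -- e = 0
        have he0 : e = 0 := by omega
        rw [he0] at hdvd
        push_cast at hdvd
        rw [mul_comm, mul_zero, add_zero] at hdvd
        by_cases hb0 : b = 0
        · rw [hb0] at hdvd
          have ha0 : a ≠ 0 := by
            intro h0
            apply hne
            rw [hd, h0, hb0, he0]; simp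
          have := int_dvd_eq_of_le (by simpa using hdvd) (by omega) (by omega)
          left
          rw [hd, hb0, he0, show a = n by omega]; simp
        · have ha0 : a = 0 := by omega
          rw [ha0] at hdvd
          have h2 : (n:ℤ) ∣ (b:ℤ) := by
            have := dvd_neg.mpr hdvd
            simpa using this
          have := int_dvd_zero_of_lt h2 (by omega) (by omega)
          omega
      · -- e = 1
        have he1 : e = 1 := by omega
        rw [he1] at hdvd
        by_cases hb0 : b = 0
        · -- s = X
          rw [hb0] at hdvd
          have heq : (a:ℤ) - ((0:ℕ):ℤ) + ((1:ℕ):ℤ) * (((j - 1 : ℕ)):ℤ)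
              = (a:ℤ) + ((j:ℤ) - 1) := by push_cast [Nat.cast_sub (by omega : 1 ≤ j)]; ring
          have h2 : (n:ℤ) ∣ ((a:ℤ) + ((j:ℤ) - 1)) := heq ▸ hdvd
          have := int_dvd_eq_of_lt_two h2 (by omega) (by omega)
          right; right; right
          rw [hd, hb0, he1, show a = n - j + 1 by omega]
          simp [Multiset.replicate_one]
        · have ha0 : a = 0 := by omega
          rw [ha0] at hdvd
          have heq : ((0:ℕ):ℤ) - (b:ℤ) + ((1:ℕ):ℤ) * (((j - 1 : ℕ)):ℤ)
              = ((j:ℤ) - 1) - (b:ℤ) := by push_cast [Nat.cast_sub (by omega : 1 ≤ j)]; ring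
          have h2 : (n:ℤ) ∣ (((j:ℤ) - 1) - (b:ℤ)) := heq ▸ hdvd
          have := int_dvd_zero_of_lt h2 (by omega) (by omega)
          right; right; left
          rw [hd, ha0, he1, show b = j - 1 by omega]
          simp [Multiset.replicate_one]
    · -- j = n : h = -g
      have hjeq : j = n := by omega
      have hhg : (j - 1 : ℕ) • g = -g := (h_eq_neg_iff hn hg hj3 hjn).2 hjeq
      have hmem : ∀ x ∈ s, x = g ∨ x = -g := by
        intro x hx
        have := Multiset.mem_of_le hs hx
        simp only [Multiset.mem_add, Multiset.mem_replicate, Multiset.mem_singleton, hhg] at this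
        tauto
      have hd := decomp2 hgg hmem
      set a := s.count g with ha
      set b := s.count (-g) with hb
      have hale : a ≤ n := by
        have h1 := Multiset.count_le_of_le g hs
        rw [Multiset.count_add, Multiset.count_add, Multiset.count_replicate,
          Multiset.count_replicate, Multiset.count_singleton, if_neg (Ne.symm hgg),
          if_pos rfl, if_neg hgh] at h1
        omega
      have hble : b ≤ n := by
        have h1 := Multiset.count_le_of_le (-g) hs
        rw [Multiset.count_add, Multiset.count_add, Multiset.count_replicate,
          Multiset.count_replicate, Multiset.count_singleton, if_pos rfl,
          if_neg hgg, if_pos hhg.symm] at h1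
        omega
      have hdvd : (n:ℤ) ∣ ((a:ℤ) - (b:ℤ)) := by
        rw [← zsmul_zero_iff hg, ← sum_ab g a b, ← hd]
        exact hsum
      by_cases hb0 : b = 0
      · rw [hb0] at hdvd
        have ha0 : a ≠ 0 := by
          intro h0
          apply hne
          rw [hd, h0, hb0]; simp
        have := int_dvd_eq_of_le (by simpa using hdvd) (by omega) (by omega)
        left
        rw [hd, hb0, show a = n by omega]; simp
      · have ha0 : a = 0 := by omega
        rw [ha0] at hdvd
        have h2 : (n:ℤ) ∣ (b:ℤ) := by
          have := dvd_neg.mpr hdvd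
          simpa using this
        have hbn : b = n := by
          have := int_dvd_eq_of_le h2 (by omega) (by omega)
          omega
        right; right; left
        rw [hd, ha0, hbn, hhg, ← Multiset.replicate_one (-g), ← Multiset.replicate_add,
          show j - 1 + 1 = n by omega]
        simp
end CatAux

namespace CatAux
open Multiset

variable {G : Type*} [AddCommGroup G] {n j : ℕ} {g : G}

section Distinct
variable (hn : 4 ≤ n) (hg : addOrderOf g = n) (hj3 : 3 ≤ j) (hjn : j ≤ n)

lemma cardU : (Multiset.replicate n g : Multiset G).card = n := by simp
lemma cardV : ({g, -g} : Multiset G).card = 2 := by simp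
lemma cardW : (Multiset.replicate (j - 1) (-g) + {(j - 1 : ℕ) • g} : Multiset G).card
    = (j - 1) + 1 := by simp
lemma cardX : (Multiset.replicate (n - j + 1) g + {(j - 1 : ℕ) • g} : Multiset G).card
    = (n - j + 1) + 1 := by simp

include hn hg hj3 hjn

lemma U_ne_V : (Multiset.replicate n g : Multiset G) ≠ ({g, -g} : Multiset G) := by
  intro e
  have := congrArg Multiset.card e
  rw [cardU, cardV] at this
  omega

lemma U_ne_W : (Multiset.replicate n g : Multiset G)
    ≠ Multiset.replicate (j - 1) (-g) + {(j - 1 : ℕ) • g} := by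
  intro e
  have := congrArg (Multiset.count g) e
  rw [Multiset.count_replicate, if_pos rfl, Multiset.count_add, Multiset.count_replicate,
    Multiset.count_singleton, if_neg (Ne.symm (g_ne_neg hn hg)),
    if_neg (fun x => h_ne_g hn hg hj3 hjn x.symm)] at this
  omega

lemma U_ne_X : (Multiset.replicate n g : Multiset G)
    ≠ Multiset.replicate (n - j + 1) g + {(j - 1 : ℕ) • g} := by
  intro e
  have := congrArg Multiset.card e
  rw [cardU, cardX] at this
  omega

lemma V_ne_W : ({g, -g} : Multiset G)
    ≠ Multiset.replicate (j - 1) (-g) + {(j - 1 : ℕ) • g} := by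
  intro e
  have := congrArg Multiset.card e
  rw [cardV, cardW] at this
  omega

lemma V_ne_X (hjlt : j < n) : ({g, -g} : Multiset G)
    ≠ Multiset.replicate (n - j + 1) g + {(j - 1 : ℕ) • g} := by
  intro e
  have := congrArg Multiset.card e
  rw [cardV, cardX] at this
  omega

lemma W_ne_X : (Multiset.replicate (j - 1) (-g) + {(j - 1 : ℕ) • g} : Multiset G)
    ≠ Multiset.replicate (n - j + 1) g + {(j - 1 : ℕ) • g} := by
  intro e
  have := congrArg (Multiset.count g) e
  rw [Multiset.count_add, Multiset.count_add, Multiset.count_replicate,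
    Multiset.count_replicate, Multiset.count_singleton,
    if_neg (Ne.symm (g_ne_neg hn hg)), if_pos rfl,
    if_neg (fun x => h_ne_g hn hg hj3 hjn x.symm)] at this
  omega

end Distinct

/-- Structure of factorizations of A. -/
lemma fact_classify (hn : 4 ≤ n) (hg : addOrderOf g = n) (hj3 : 3 ≤ j) (hjn : j ≤ n)
    {F : Multiset (Multiset G)}
    (hall : ∀ s ∈ F, IsMinZeroSum s)
    (hsumF : F.sum = Multiset.replicate (j - 1) (-g) + Multiset.replicate n g
      + {(j - 1 : ℕ) • g}) :
    F = ({Multiset.replicate n g, Multiset.replicate (j - 1) (-g) + {(j - 1 : ℕ) • g}}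
        : Multiset (Multiset G)) ∨
    F = Multiset.replicate (j - 1) ({g, -g} : Multiset G)
        + {Multiset.replicate (n - j + 1) g + {(j - 1 : ℕ) • g}} := by
  classical
  have hgg : g ≠ -g := g_ne_neg hn hg
  have hgh : g ≠ (j - 1 : ℕ) • g := fun e => h_ne_g hn hg hj3 hjn e.symm
  set U := (Multiset.replicate n g : Multiset G) with hU
  set V := ({g, -g} : Multiset G) with hV
  set W := (Multiset.replicate (j - 1) (-g) + {(j - 1 : ℕ) • g} : Multiset G) with hW
  set X := (Multiset.replicate (n - j + 1) g + {(j - 1 : ℕ) • g} : Multiset G) with hX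
  have hparts : ∀ s ∈ F, s = U ∨ s = V ∨ s = W ∨ s = X := fun s hsF =>
    classify hn hg hj3 hjn (hsumF ▸ mem_le_sum hsF) (hall s hsF)
  -- counts of A
  have cA_g : Multiset.count g (Multiset.replicate (j - 1) (-g) + Multiset.replicate n g
      + {(j - 1 : ℕ) • g}) = n := by
    simp [Multiset.count_add, Multiset.count_replicate, Multiset.count_singleton,
      Ne.symm hgg, hgh]
  have cU_g : Multiset.count g U = n := by rw [hU, Multiset.count_replicate, if_pos rfl]
  have cV_g : Multiset.count g V = 1 := count_pair_left hgg
  have cW_g : Multiset.count g W = 0 := by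
    simp [hW, Multiset.count_add, Multiset.count_replicate, Multiset.count_singleton,
      Ne.symm hgg, hgh]
  have cX_g : Multiset.count g X = n - j + 1 := by
    simp [hX, Multiset.count_add, Multiset.count_replicate, Multiset.count_singleton, hgh]
  have cU_ng : Multiset.count (-g) U = 0 := by
    rw [hU, Multiset.count_replicate, if_neg hgg]
  have cV_ng : Multiset.count (-g) V = 1 := count_pair_right hgg
  by_cases hjlt : j < n
  · -- the four sequences are pairwise distinct
    have hngh : -g ≠ (j - 1 : ℕ) • g := by
      intro e
      exact absurd ((h_eq_neg_iff hn hg hj3 hjn).1 e.symm) (by omega)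
    have cA_ng : Multiset.count (-g) (Multiset.replicate (j - 1) (-g) + Multiset.replicate n g
        + {(j - 1 : ℕ) • g}) = j - 1 := by
      simp [Multiset.count_add, Multiset.count_replicate, Multiset.count_singleton,
        hgg, hngh]
    have cA_h : Multiset.count ((j - 1 : ℕ) • g) (Multiset.replicate (j - 1) (-g)
        + Multiset.replicate n g + {(j - 1 : ℕ) • g}) = 1 := by
      simp [Multiset.count_add, Multiset.count_replicate, Multiset.count_singleton,
        hngh, hgh]
    have cW_ng : Multiset.count (-g) W = j - 1 := by
      simp [hW, Multiset.count_add, Multiset.count_replicate, Multiset.count_singleton, hngh]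
    have cX_ng : Multiset.count (-g) X = 0 := by
      simp [hX, Multiset.count_add, Multiset.count_replicate, Multiset.count_singleton,
        Multiset.mem_replicate, hgg, Ne.symm hgg, hngh]
    have cU_h : Multiset.count ((j - 1 : ℕ) • g) U = 0 := by
      rw [hU, Multiset.count_replicate, if_neg hgh]
    have cV_h : Multiset.count ((j - 1 : ℕ) • g) V = 0 := by
      rw [hV, Multiset.count_eq_zero]
      simp [Ne.symm hgh, Ne.symm hngh]
    have cW_h : Multiset.count ((j - 1 : ℕ) • g) W = 1 := by
      simp [hW, Multiset.count_add, Multiset.count_replicate, Multiset.count_singleton,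
        hngh, Ne.symm hngh]
    have cX_h : Multiset.count ((j - 1 : ℕ) • g) X = 1 := by
      simp [hX, Multiset.count_add, Multiset.count_replicate, Multiset.count_singleton,
        Multiset.mem_replicate, hgh, Ne.symm hgh]
    have hdF := decomp4 (U_ne_V hn hg hj3 hjn) (U_ne_W hn hg hj3 hjn) (U_ne_X hn hg hj3 hjn)
      (V_ne_W hn hg hj3 hjn) (V_ne_X hn hg hj3 hjn hjlt) (W_ne_X hn hg hj3 hjn) hparts
    obtain ⟨p, hp⟩ : ∃ k, F.count U = k := ⟨_, rfl⟩
    obtain ⟨q, hq⟩ : ∃ k, F.count V = k := ⟨_, rfl⟩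
    obtain ⟨r, hr⟩ : ∃ k, F.count W = k := ⟨_, rfl⟩
    obtain ⟨t, ht⟩ : ∃ k, F.count X = k := ⟨_, rfl⟩
    rw [hp, hq, hr, ht] at hdF
    have hkey : p • U + q • V + r • W + t • X = Multiset.replicate (j - 1) (-g)
        + Multiset.replicate n g + {(j - 1 : ℕ) • g} := by
      rw [← hsumF, hdF, Multiset.sum_add, Multiset.sum_add, Multiset.sum_add,
        Multiset.sum_replicate, Multiset.sum_replicate, Multiset.sum_replicate,
        Multiset.sum_replicate]
    have e_g := congrArg (Multiset.count g) hkey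
    have e_ng := congrArg (Multiset.count (-g)) hkey
    have e_h := congrArg (Multiset.count ((j - 1 : ℕ) • g)) hkey
    rw [Multiset.count_add, Multiset.count_add, Multiset.count_add, Multiset.count_nsmul,
      Multiset.count_nsmul, Multiset.count_nsmul, Multiset.count_nsmul,
      cU_g, cV_g, cW_g, cX_g, cA_g] at e_g
    rw [Multiset.count_add, Multiset.count_add, Multiset.count_add, Multiset.count_nsmul,
      Multiset.count_nsmul, Multiset.count_nsmul, Multiset.count_nsmul,
      cU_ng, cV_ng, cW_ng, cX_ng, cA_ng] at e_ng
    rw [Multiset.count_add, Multiset.count_add, Multiset.count_add, Multiset.count_nsmul,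
      Multiset.count_nsmul, Multiset.count_nsmul, Multiset.count_nsmul,
      cU_h, cV_h, cW_h, cX_h, cA_h] at e_h
    have hrt : r = 1 ∧ t = 0 ∨ r = 0 ∧ t = 1 := by omega
    rcases hrt with ⟨hr1, ht0⟩ | ⟨hr0, ht1⟩
    · left
      rw [hr1, ht0] at e_ng e_g
      have hq0 : q = 0 := by omega
      rw [hq0] at e_g
      have hp1 : p = 1 := by
        have h2 : p * n = 1 * n := by omega
        exact Nat.eq_of_mul_eq_mul_right (by omega) h2
      rw [hdF, hp1, hq0, hr1, ht0]
      simp only [Multiset.replicate_zero, Multiset.replicate_one, zero_add, add_zero]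
      rw [Multiset.singleton_add]
      rfl
    · right
      rw [hr0, ht1] at e_ng e_g
      have hqj : q = j - 1 := by omega
      rw [hqj] at e_g
      obtain ⟨P, hP⟩ : ∃ P, p * n = P := ⟨_, rfl⟩
      rw [hP] at e_g
      have hP0 : P = 0 := by omega
      have hp0 : p = 0 := by
        rcases Nat.mul_eq_zero.1 (hP.trans hP0) with h | h
        · exact h
        · omega
      rw [hdF, hp0, hqj, hr0, ht1]
      simp only [Multiset.replicate_zero, Multiset.replicate_one, zero_add, add_zero]
      rfl
  · -- j = n : X = V
    have hjeq : j = n := by omega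
    have hhg : (j - 1 : ℕ) • g = -g := (h_eq_neg_iff hn hg hj3 hjn).2 hjeq
    have hXV : X = V := by
      rw [hX, hV, show n - j + 1 = 1 by omega, hhg, Multiset.replicate_one,
        Multiset.singleton_add, Multiset.insert_eq_cons]
    have hparts' : ∀ s ∈ F, s = U ∨ s = V ∨ s = W := by
      intro s hsF
      rcases hparts s hsF with h | h | h | h
      · tauto
      · tauto
      · tauto
      · rw [hXV] at h; tauto
    have hdF := decomp3 (U_ne_V hn hg hj3 hjn) (U_ne_W hn hg hj3 hjn)
      (V_ne_W hn hg hj3 hjn) hparts'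
    obtain ⟨p, hp⟩ : ∃ k, F.count U = k := ⟨_, rfl⟩
    obtain ⟨q, hq⟩ : ∃ k, F.count V = k := ⟨_, rfl⟩
    obtain ⟨r, hr⟩ : ∃ k, F.count W = k := ⟨_, rfl⟩
    rw [hp, hq, hr] at hdF
    have cA_ng : Multiset.count (-g) (Multiset.replicate (j - 1) (-g) + Multiset.replicate n g
        + {(j - 1 : ℕ) • g}) = (j - 1) + 1 := by
      rw [hhg]
      simp [Multiset.count_add, Multiset.count_replicate, Multiset.count_singleton, hgg]
    have cW_ng : Multiset.count (-g) W = (j - 1) + 1 := by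
      rw [hW, hhg]
      simp [Multiset.count_add, Multiset.count_replicate, Multiset.count_singleton]
    have hkey : p • U + q • V + r • W = Multiset.replicate (j - 1) (-g)
        + Multiset.replicate n g + {(j - 1 : ℕ) • g} := by
      rw [← hsumF, hdF, Multiset.sum_add, Multiset.sum_add, Multiset.sum_replicate,
        Multiset.sum_replicate, Multiset.sum_replicate]
    have e_g := congrArg (Multiset.count g) hkey
    have e_ng := congrArg (Multiset.count (-g)) hkey
    rw [Multiset.count_add, Multiset.count_add, Multiset.count_nsmul, Multiset.count_nsmul,
      Multiset.count_nsmul, cU_g, cV_g, cW_g, cA_g] at e_g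
    rw [Multiset.count_add, Multiset.count_add, Multiset.count_nsmul, Multiset.count_nsmul,
      Multiset.count_nsmul, cU_ng, cV_ng, cW_ng, cA_ng] at e_ng
    rw [show (j - 1) + 1 = n by omega] at e_ng
    obtain ⟨P, hP⟩ : ∃ P, p * n = P := ⟨_, rfl⟩
    obtain ⟨R, hR⟩ : ∃ R, r * n = R := ⟨_, rfl⟩
    rw [hP] at e_g
    rw [hR] at e_ng
    by_cases hp0 : p = 0
    · right
      have hP0 : P = 0 := by rw [← hP, hp0, zero_mul]
      have hqn : q = n := by omega
      have hR0 : R = 0 := by omega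
      have hr0 : r = 0 := by
        rcases Nat.mul_eq_zero.1 (hR.trans hR0) with h | h
        · exact h
        · omega
      rw [hdF, hp0, hqn, hr0]
      simp only [Multiset.replicate_zero, zero_add, add_zero]
      rw [hXV, ← Multiset.replicate_one V, ← Multiset.replicate_add,
        show j - 1 + 1 = n by omega]
    · left
      have hPn : n ≤ P := by
        rw [← hP]
        exact Nat.le_mul_of_pos_left n (by omega)
      have hPeq : P = n := by omega
      have hp1 : p = 1 := by
        have h2 : p * n = 1 * n := by omega
        exact Nat.eq_of_mul_eq_mul_right (by omega) h2
      have hq0 : q = 0 := by omega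
      have hRn : R = n := by omega
      have hr1 : r = 1 := by
        have h2 : r * n = 1 * n := by omega
        exact Nat.eq_of_mul_eq_mul_right (by omega) h2
      rw [hdF, hp1, hq0, hr1]
      simp only [Multiset.replicate_zero, Multiset.replicate_one, zero_add, add_zero]
      rw [Multiset.singleton_add]
      rfl
end CatAux

namespace CatAux
open Multiset

variable {G : Type*} [AddCommGroup G] {n j : ℕ} {g : G}

lemma nsmul_singleton' {α : Type*} (x : α) (k : ℕ) :
    k • ({x} : Multiset α) = Multiset.replicate k x := by
  induction k with
  | zero => simp
  | succ m ih =>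
    rw [succ_nsmul, ih, ← Multiset.replicate_one x, ← Multiset.replicate_add]

lemma nsmul_pair {α : Type*} (x y : α) (k : ℕ) :
    k • ({x, y} : Multiset α) = Multiset.replicate k x + Multiset.replicate k y := by
  have : ({x, y} : Multiset α) = {x} + {y} := by
    rw [Multiset.singleton_add, Multiset.insert_eq_cons]
  rw [this, smul_add, nsmul_singleton', nsmul_singleton']

lemma F1_mem (hn : 4 ≤ n) (hg : addOrderOf g = n) (hj3 : 3 ≤ j) (hjn : j ≤ n) :
    (∀ s ∈ ({Multiset.replicate n g,
        Multiset.replicate (j - 1) (-g) + {(j - 1 : ℕ) • g}} : Multiset (Multiset G)),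
      IsMinZeroSum s) ∧
    ({Multiset.replicate n g,
        Multiset.replicate (j - 1) (-g) + {(j - 1 : ℕ) • g}} : Multiset (Multiset G)).sum
      = Multiset.replicate (j - 1) (-g) + Multiset.replicate n g + {(j - 1 : ℕ) • g} := by
  constructor
  · intro s hs
    rcases (by simpa using hs : s = Multiset.replicate n g ∨
        s = Multiset.replicate (j - 1) (-g) + {(j - 1 : ℕ) • g}) with h | h
    · rw [h]; exact minU hn hg
    · rw [h]; exact minW hn hg hj3 hjn
  · rw [Multiset.insert_eq_cons, Multiset.sum_cons, Multiset.sum_singleton, ← add_assoc,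
      add_comm (Multiset.replicate n g) (Multiset.replicate (j - 1) (-g))]

lemma F2_mem (hn : 4 ≤ n) (hg : addOrderOf g = n) (hj3 : 3 ≤ j) (hjn : j ≤ n) :
    (∀ s ∈ (Multiset.replicate (j - 1) ({g, -g} : Multiset G)
        + {Multiset.replicate (n - j + 1) g + {(j - 1 : ℕ) • g}}),
      IsMinZeroSum s) ∧
    (Multiset.replicate (j - 1) ({g, -g} : Multiset G)
        + {Multiset.replicate (n - j + 1) g + {(j - 1 : ℕ) • g}}).sum
      = Multiset.replicate (j - 1) (-g) + Multiset.replicate n g + {(j - 1 : ℕ) • g} := by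
  constructor
  · intro s hs
    rw [Multiset.mem_add] at hs
    rcases hs with hs | hs
    · rw [Multiset.eq_of_mem_replicate hs]
      exact minV hn hg
    · rw [Multiset.mem_singleton.1 hs]
      exact minX hn hg hj3 hjn
  · rw [Multiset.sum_add, Multiset.sum_replicate, Multiset.sum_singleton, nsmul_pair]
    have h1 : Multiset.replicate (j - 1) g + Multiset.replicate (n - j + 1) g
        = Multiset.replicate n g := by
      rw [← Multiset.replicate_add, show j - 1 + (n - j + 1) = n by omega]
    calc Multiset.replicate (j - 1) g + Multiset.replicate (j - 1) (-g)
        + (Multiset.replicate (n - j + 1) g + {(j - 1 : ℕ) • g})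
        = Multiset.replicate (j - 1) (-g)
          + (Multiset.replicate (j - 1) g + Multiset.replicate (n - j + 1) g)
          + {(j - 1 : ℕ) • g} := by
          simp only [← add_assoc]
          rw [add_comm (Multiset.replicate (j - 1) g) (Multiset.replicate (j - 1) (-g))]
      _ = Multiset.replicate (j - 1) (-g) + Multiset.replicate n g + {(j - 1 : ℕ) • g} := by
          rw [h1]
end CatAux

/-- For G cyclic of order n ≥ 4 with generator g, 3 ≤ j ≤ n and h = (j-1)g, the
zero-sum sequence A = (-g)^(j-1) gⁿ h has exactly the two factorizations U·W and
V^(j-1)·X, where U = gⁿ, V = g(-g), W = (-g)^(j-1)h, X = g^(n-j+1)h;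
consequently c(A) = j. -/
theorem catDeg_j_example {G : Type*} [AddCommGroup G] [Fintype G] (n : ℕ)
    (hn : 4 ≤ n) (hcard : Fintype.card G = n) (g : G) (hg : addOrderOf g = n)
    (j : ℕ) (hj3 : 3 ≤ j) (hjn : j ≤ n) :
    BFact (Multiset.replicate (j - 1) (-g) + Multiset.replicate n g + {(j - 1 : ℕ) • g}) =
      {({Multiset.replicate n g,
          Multiset.replicate (j - 1) (-g) + {(j - 1 : ℕ) • g}} : Multiset (Multiset G)),
        Multiset.replicate (j - 1) ({g, -g} : Multiset G) +
          {Multiset.replicate (n - j + 1) g + {(j - 1 : ℕ) • g}}} ∧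
    bCatDeg (Multiset.replicate (j - 1) (-g) + Multiset.replicate n g +
        {(j - 1 : ℕ) • g}) = j := by
  
  classical
  obtain ⟨hall1, hsum1⟩ := CatAux.F1_mem hn hg hj3 hjn
  obtain ⟨hall2, hsum2⟩ := CatAux.F2_mem hn hg hj3 hjn
  set A : Multiset G := Multiset.replicate (j - 1) (-g) + Multiset.replicate n g
    + {(j - 1 : ℕ) • g} with hA
  set U : Multiset G := Multiset.replicate n g with hU
  set V : Multiset G := {g, -g} with hV
  set W : Multiset G := Multiset.replicate (j - 1) (-g) + {(j - 1 : ℕ) • g} with hW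
  set X : Multiset G := Multiset.replicate (n - j + 1) g + {(j - 1 : ℕ) • g} with hX
  set F1 : Multiset (Multiset G) := {U, W} with hF1
  set F2 : Multiset (Multiset G) := Multiset.replicate (j - 1) V + {X} with hF2
  have hF1mem : F1 ∈ BFact A := ⟨hall1, hsum1⟩
  have hF2mem : F2 ∈ BFact A := ⟨hall2, hsum2⟩
  have hset : BFact A = {F1, F2} := by
    ext F
    simp only [Set.mem_insert_iff, Set.mem_singleton_iff]
    constructor
    · rintro ⟨hall, hsum⟩
      exact CatAux.fact_classify hn hg hj3 hjn hall hsum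
    · rintro (rfl | rfl)
      · exact hF1mem
      · exact hF2mem
  refine ⟨hset, ?_⟩
  -- distinctness facts
  have hUV := CatAux.U_ne_V hn hg hj3 hjn
  have hUW := CatAux.U_ne_W hn hg hj3 hjn
  have hUX := CatAux.U_ne_X hn hg hj3 hjn
  have hVW := CatAux.V_ne_W hn hg hj3 hjn
  have hWX := CatAux.W_ne_X hn hg hj3 hjn
  have hUnotF2 : U ∉ F2 := by
    intro hmem
    rw [hF2, Multiset.mem_add] at hmem
    rcases hmem with h | h
    · exact hUV (Multiset.eq_of_mem_replicate h)
    · exact hUX (Multiset.mem_singleton.1 h)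
  have hWnotF2 : W ∉ F2 := by
    intro hmem
    rw [hF2, Multiset.mem_add] at hmem
    rcases hmem with h | h
    · exact hVW (Multiset.eq_of_mem_replicate h).symm
    · exact hWX (Multiset.mem_singleton.1 h)
  have hVnotF1 : V ∉ F1 := by
    intro hmem
    rcases (by simpa [hF1] using hmem : V = U ∨ V = W) with h | h
    · exact hUV h.symm
    · exact hVW h
  have hXnotF1 : X ∉ F1 := by
    intro hmem
    rcases (by simpa [hF1] using hmem : X = U ∨ X = W) with h | h
    · exact hUX h.symm
    · exact hWX h.symm
  have hmemF1 : ∀ s, s ∈ F1 → s = U ∨ s = W := by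
    intro s hs
    simpa [hF1] using hs
  have hmemF2 : ∀ s, s ∈ F2 → s = V ∨ s = X := by
    intro s hs
    rw [hF2, Multiset.mem_add] at hs
    rcases hs with h | h
    · exact Or.inl (Multiset.eq_of_mem_replicate h)
    · exact Or.inr (Multiset.mem_singleton.1 h)
  have hsub1 : F1 - F2 = F1 := by
    ext s
    rw [Multiset.count_sub]
    by_cases h2 : s ∈ F2
    · have h1 : s ∉ F1 := by
        rcases hmemF2 s h2 with h | h
        · rw [h]; exact hVnotF1
        · rw [h]; exact hXnotF1
      rw [Multiset.count_eq_zero.2 h1]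
      simp
    · rw [Multiset.count_eq_zero.2 h2]
      simp
  have hsub2 : F2 - F1 = F2 := by
    ext s
    rw [Multiset.count_sub]
    by_cases h1 : s ∈ F1
    · have h2 : s ∉ F2 := by
        rcases hmemF1 s h1 with h | h
        · rw [h]; exact hUnotF2
        · rw [h]; exact hWnotF2
      rw [Multiset.count_eq_zero.2 h2]
      simp
    · rw [Multiset.count_eq_zero.2 h1]
      simp
  have hcard1 : F1.card = 2 := by
    rw [hF1, Multiset.insert_eq_cons, Multiset.card_cons, Multiset.card_singleton]
  have hcard2 : F2.card = j := by
    rw [hF2, Multiset.card_add, Multiset.card_replicate, Multiset.card_singleton]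
    omega
  have hne12 : F1 ≠ F2 := by
    intro e
    have := congrArg Multiset.card e
    rw [hcard1, hcard2] at this
    omega
  have hdist : bdist F1 F2 = j := by
    rw [bdist, hsub1, hsub2, hcard1, hcard2]
    exact max_eq_right (by omega)
  have hdist' : bdist F2 F1 = j := by
    rw [bdist, hsub2, hsub1, hcard2, hcard1]
    exact max_eq_left (by omega)
  -- j is an admissible chain bound
  have hjS : j ∈ {N | ∀ F ∈ BFact A, ∀ F' ∈ BFact A, BIsNChain (BFact A) N F F'} := by
    intro F hF F' hF'
    have hFc : F = F1 ∨ F = F2 := by rw [hset] at hF; simpa using hF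
    have hF'c : F' = F1 ∨ F' = F2 := by rw [hset] at hF'; simpa using hF'
    by_cases heq : F = F'
    · refine ⟨[F], rfl, by simp [heq], ?_, List.isChain_singleton F⟩
      intro x hx
      rw [List.mem_singleton.1 hx]
      exact hF
    · refine ⟨[F, F'], rfl, by simp, ?_, ?_⟩
      · intro x hx
        rcases (by simpa using hx : x = F ∨ x = F') with rfl | rfl
        · exact hF
        · exact hF'
      · rw [show List.Chain' (fun x y => bdist x y ≤ j) [F, F'] ↔ _ from List.isChain_pair]
        rcases hFc with rfl | rfl <;> rcases hF'c with rfl | rfl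
        · exact absurd rfl heq
        · rw [hdist]
        · rw [hdist']
        · exact absurd rfl heq
  -- lower bound: any admissible N is at least j
  have hlow : ∀ N ∈ {N | ∀ F ∈ BFact A, ∀ F' ∈ BFact A, BIsNChain (BFact A) N F F'},
      j ≤ N := by
    intro N hN
    obtain ⟨l, hh, hl, hmem, hch⟩ := hN F1 hF1mem F2 hF2mem
    have hmem' : ∀ x ∈ l, x = F1 ∨ x = F2 := by
      intro x hx
      have := hmem x hx
      rw [hset] at this
      simpa using this
    have key : ∀ L : List (Multiset (Multiset G)), (∀ x ∈ L, x = F1 ∨ x = F2) →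
        L.Chain' (fun x y => bdist x y ≤ N) → L.head? = some F1 → L.getLast? = some F2 →
        bdist F1 F2 ≤ N := by
      intro L
      induction L with
      | nil => intro _ _ hh' _; simp at hh'
      | cons x xs ih =>
        intro hm hc hh' hl'
        have hx : x = F1 := by simpa using hh'
        cases xs with
        | nil =>
          have hxl : x = F2 := by simpa using hl'
          exact absurd (hx.symm.trans hxl) hne12
        | cons y ys =>
          have hcc := List.isChain_cons_cons.1 hc
          rcases hm y (by simp) with h | h
          · refine ih (fun z hz => hm z (List.mem_cons_of_mem _ hz)) hcc.2 (by simp [h]) ?_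
            rw [← hl', List.getLast?_cons_cons]
          · have h2 := hcc.1
            rw [hx, h] at h2
            exact h2
    have h3 := key l hmem' hch hh hl
    rw [hdist] at h3
    exact h3
  exact le_antisymm (Nat.sInf_le hjS) (le_csInf ⟨j, hjS⟩ hlow)
end
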